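/- arXiv:2005.01357 — 3 statements merged into one kernel-verified Lean document; each statement's English description precedes it below -/
import Mathlib

section
/- Assume (H1)–(H6). For every ω ∈ Ω and every μ ≥ Ã(ω) there exists a globally Lipschitz function m_μ(·,0,ω) : ℝ → ℝ which is a viscosity solution of the metric problem H(Dm_μ(y,0,ω),y,ω) = μ in ℝ ∖ {0} with m_μ(0,0,ω) = 0. -/
open MeasureTheory ProbabilityTheory Set Filter Topology

noncomputable section

variable {Ω : Type*}

/-! ### Viscosity solutions of stationary Hamilton-Jacobi equations -/

/-- Viscosity subsolution of `G(Du, y) ≤ μ` on the set `U`. -/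
def IsViscSubsol (G : ℝ → ℝ → ℝ) (μ : ℝ) (U : Set ℝ) (u : ℝ → ℝ) : Prop :=
  ∀ φ : ℝ → ℝ, ContDiff ℝ 1 φ → ∀ y₀ ∈ U,
    IsLocalMaxOn (fun y => u y - φ y) U y₀ → G (deriv φ y₀) y₀ ≤ μ

/-- Viscosity supersolution of `G(Du, y) ≥ μ` on the set `U`. -/
def IsViscSupersol (G : ℝ → ℝ → ℝ) (μ : ℝ) (U : Set ℝ) (u : ℝ → ℝ) : Prop :=
  ∀ φ : ℝ → ℝ, ContDiff ℝ 1 φ → ∀ y₀ ∈ U,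
    IsLocalMinOn (fun y => u y - φ y) U y₀ → μ ≤ G (deriv φ y₀) y₀

/-- Viscosity solution of `G(Du, y) = μ` on the set `U`. -/
def IsViscSol (G : ℝ → ℝ → ℝ) (μ : ℝ) (U : Set ℝ) (u : ℝ → ℝ) : Prop :=
  IsViscSubsol G μ U u ∧ IsViscSupersol G μ U u

/-- Globally Lipschitz real function. -/
def IsLip (v : ℝ → ℝ) : Prop := ∃ K : NNReal, LipschitzWith K v

/-- Assumptions (H1)–(H6) on a random Hamiltonian `H = H(p, y, ω)`. -/
structure HamHyp [MeasurableSpace Ω] (H : ℝ → ℝ → Ω → ℝ) : Prop where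
  meas : Measurable fun q : ℝ × ℝ × Ω => H q.1 q.2.1 q.2.2
  lip_p : ∃ K : NNReal, ∀ (y : ℝ) (ω : Ω), LipschitzWith K fun p => H p y ω
  bounds : ∃ c₀ C₀ γ : ℝ, 0 < c₀ ∧ 0 < C₀ ∧ 0 < γ ∧
    ∀ (p y : ℝ) (ω : Ω), -c₀ * |p + γ| ≤ H p y ω ∧ H p y ω ≤ C₀ * |p + γ|
  coercive : ∀ M : ℝ, ∃ R : ℝ, ∀ (p y : ℝ) (ω : Ω), R ≤ |p| → M ≤ H p y ω
  modulus : ∃ w : ℝ → ℝ, Monotone w ∧ w 0 = 0 ∧ ContinuousAt w 0 ∧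
    ∀ (p x y : ℝ) (ω : Ω), |H p y ω - H p x ω| ≤ w (|x - y| * (1 + |p|))
  convex_p : ∀ (y : ℝ) (ω : Ω), ConvexOn ℝ Set.univ fun p => H p y ω
  min_at_zero : ∀ (p y : ℝ) (ω : Ω), H 0 y ω ≤ H p y ω

/-- The stochastic flux limiter `Ã(ω)`: the smallest `μ` such that the equation
`H(Dv, y, ω) ≤ μ` admits a globally Lipschitz viscosity subsolution on `ℝ`. -/
def fluxLimiter (H : ℝ → ℝ → Ω → ℝ) (ω : Ω) : ℝ :=
  sInf {μ : ℝ | ∃ v : ℝ → ℝ, IsLip v ∧ IsViscSubsol (fun p y => H p y ω) μ Set.univ v}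

/-- The maximal subsolution `m_μ(y, x, ω)` of the metric problem. -/
def metricSol (H : ℝ → ℝ → Ω → ℝ) (μ : ℝ) (ω : Ω) (y x : ℝ) : ℝ :=
  sSup {r : ℝ | ∃ v : ℝ → ℝ, IsLip v ∧
    IsViscSubsol (fun p y => H p y ω) μ Set.univ v ∧ r = v y - v x}

/-! ### Stochastic framework -/

/-- Stationarity (H8) of a Hamiltonian with respect to a translation group `τ`. -/
def Stationary (τ : ℝ → Ω → Ω) (H : ℝ → ℝ → Ω → ℝ) : Prop :=
  ∀ (p y z : ℝ) (ω : Ω), H p (y + z) ω = H p y (τ z ω)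

/-- An ergodic group of measure-preserving transformations of `(Ω, F, P)`. -/
structure ErgodicSetup [MeasurableSpace Ω] (P : Measure Ω) (τ : ℝ → Ω → Ω) : Prop where
  meas : ∀ z, Measurable (τ z)
  preserving : ∀ z, MeasurePreserving (τ z) P P
  add : ∀ x z : ℝ, τ (x + z) = τ x ∘ τ z
  ergodic : ∀ A : Set Ω, MeasurableSet A → (∀ z, τ z ⁻¹' A = A) → P A = 0 ∨ P A = 1

/-- σ-algebra generated by the maps `ω ↦ H(p, y, ω)`, `y ∈ U`, `p ∈ ℝ`. -/
def genSigma [MeasurableSpace Ω] (H : ℝ → ℝ → Ω → ℝ) (U : Set ℝ) : MeasurableSpace Ω :=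
  ⨆ y ∈ U, ⨆ p : ℝ, MeasurableSpace.comap (fun ω => H p y ω) inferInstance

/-- Unit range of dependence (H9). -/
def UnitRangeDep [MeasurableSpace Ω] (P : Measure Ω) (H : ℝ → ℝ → Ω → ℝ) : Prop :=
  ∀ U V : Set ℝ, MeasurableSet U → MeasurableSet V →
    (∀ x ∈ U, ∀ y ∈ V, 1 ≤ |x - y|) →
    ProbabilityTheory.Indep (genSigma H U) (genSigma H V) P

/-! ### The decompositions (H7-WFL) and (H7-ε) for a family `H ε` of Hamiltonians -/

/-- (H7-WFL). -/
def DecompWFL (HL HR : ℝ → ℝ → Ω → ℝ) (H : ℝ → ℝ → ℝ → Ω → ℝ) : Prop :=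
  ∃ φ : ℝ → ℝ, ContDiff ℝ (⊤ : ℕ∞) φ ∧ Antitone φ ∧
    (∀ y : ℝ, y ≤ -1 → φ y = 1) ∧ (∀ y : ℝ, 1 ≤ y → φ y = 0) ∧
    ∀ (ε p y : ℝ) (ω : Ω), H ε p y ω = φ y * HL p y ω + (1 - φ y) * HR p y ω

/-- (H7-ε). -/
def DecompEps (HL HR H0 : ℝ → ℝ → Ω → ℝ) (H : ℝ → ℝ → ℝ → Ω → ℝ) : Prop :=
  (∀ (p y : ℝ) (ω : Ω), HL p y ω ≤ H0 p y ω ∧ HR p y ω ≤ H0 p y ω) ∧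
  ∃ ψ : ℝ → ℝ → ℝ,
    (∀ ε : ℝ, 0 < ε → ContDiff ℝ (⊤ : ℕ∞) (ψ ε) ∧
      (∀ y : ℝ, 2 / Real.sqrt ε < y → ψ ε y = 1) ∧
      (∀ y : ℝ, y < 1 / Real.sqrt ε → ψ ε y = 0)) ∧
    ∀ ε : ℝ, 0 < ε → ∀ (p y : ℝ) (ω : Ω), H ε p y ω =
      ψ ε (-y) * HL p y ω + (1 - ψ ε (-y)) * (1 - ψ ε y) * H0 p y ω + ψ ε y * HR p y ω

/-! ### Effective Hamiltonians -/

/-- The effective Hamiltonian `H̄_α(p)` at a fixed `ω`: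
`inf` of the `μ` for which `H_α(p + Dv, y, ω) ≤ μ` has a Lipschitz, strictly sublinear
viscosity subsolution. -/
def effectiveHam (Hα : ℝ → ℝ → Ω → ℝ) (ω : Ω) (p : ℝ) : ℝ :=
  sInf {μ : ℝ | ∃ v : ℝ → ℝ, IsLip v ∧
    Tendsto (fun y => v y / |y|) (cocompact ℝ) (𝓝 0) ∧
    IsViscSubsol (fun q y => Hα q y ω) μ Set.univ fun y => p * y + v y}

/-- Non-decreasing part of a (convex coercive) Hamiltonian. -/
def Hplus (G : ℝ → ℝ) (p : ℝ) : ℝ := if 0 ≤ p then G p else sInf (Set.range G)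

/-- Non-increasing part of a (convex coercive) Hamiltonian. -/
def Hminus (G : ℝ → ℝ) (p : ℝ) : ℝ := if p ≤ 0 then G p else sInf (Set.range G)

/-! ### The approximated corrector equation -/

/-- Viscosity solution of `δ v + G(Dv, y) = 0` on `ℝ`. -/
def IsViscSolDelta (G : ℝ → ℝ → ℝ) (δ : ℝ) (v : ℝ → ℝ) : Prop :=
  (∀ φ : ℝ → ℝ, ContDiff ℝ 1 φ → ∀ y₀ : ℝ, IsLocalMax (fun y => v y - φ y) y₀ →
    δ * v y₀ + G (deriv φ y₀) y₀ ≤ 0) ∧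
  (∀ φ : ℝ → ℝ, ContDiff ℝ 1 φ → ∀ y₀ : ℝ, IsLocalMin (fun y => v y - φ y) y₀ →
    0 ≤ δ * v y₀ + G (deriv φ y₀) y₀)

/-! ### Evolutive Hamilton–Jacobi equations -/

/-- Viscosity subsolution of `u_t + G(Du, y) = 0` on `(0,T) × ℝ`. -/
def IsViscSubsolEvol (G : ℝ → ℝ → ℝ) (T : ℝ) (u : ℝ → ℝ → ℝ) : Prop :=
  ∀ φ : ℝ × ℝ → ℝ, ContDiff ℝ 1 φ → ∀ t₀ x₀ : ℝ, 0 < t₀ → t₀ < T →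
    IsLocalMaxOn (fun q : ℝ × ℝ => u q.1 q.2 - φ q) (Set.Ioo 0 T ×ˢ Set.univ) (t₀, x₀) →
    deriv (fun t => φ (t, x₀)) t₀ + G (deriv (fun x => φ (t₀, x)) x₀) x₀ ≤ 0

/-- Viscosity supersolution of `u_t + G(Du, y) = 0` on `(0,T) × ℝ`. -/
def IsViscSupersolEvol (G : ℝ → ℝ → ℝ) (T : ℝ) (u : ℝ → ℝ → ℝ) : Prop :=
  ∀ φ : ℝ × ℝ → ℝ, ContDiff ℝ 1 φ → ∀ t₀ x₀ : ℝ, 0 < t₀ → t₀ < T →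
    IsLocalMinOn (fun q : ℝ × ℝ => u q.1 q.2 - φ q) (Set.Ioo 0 T ×ˢ Set.univ) (t₀, x₀) →
    0 ≤ deriv (fun t => φ (t, x₀)) t₀ + G (deriv (fun x => φ (t₀, x)) x₀) x₀

/-! ### The junction problem -/

/-- Test functions for the junction problem: continuous, `C¹` on each side of the junction. -/
def IsPiecewiseC1 (φ : ℝ × ℝ → ℝ) : Prop :=
  Continuous φ ∧ ContDiffOn ℝ 1 φ {q : ℝ × ℝ | q.2 ≤ 0} ∧
    ContDiffOn ℝ 1 φ {q : ℝ × ℝ | 0 ≤ q.2}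

/-- Viscosity subsolution of the junction problem with flux limiter `A`. -/
def IsJunctionSubsol (HLb HRb : ℝ → ℝ) (A T : ℝ) (u : ℝ → ℝ → ℝ) : Prop :=
  ∀ φ : ℝ × ℝ → ℝ, IsPiecewiseC1 φ → ∀ t₀ x₀ : ℝ, 0 < t₀ → t₀ < T →
    IsLocalMaxOn (fun q : ℝ × ℝ => u q.1 q.2 - φ q) (Set.Ioo 0 T ×ˢ Set.univ) (t₀, x₀) →
    (x₀ < 0 → deriv (fun t => φ (t, x₀)) t₀ + HLb (deriv (fun x => φ (t₀, x)) x₀) ≤ 0) ∧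
    (0 < x₀ → deriv (fun t => φ (t, x₀)) t₀ + HRb (deriv (fun x => φ (t₀, x)) x₀) ≤ 0) ∧
    (x₀ = 0 → deriv (fun t => φ (t, 0)) t₀ +
      max A (max (Hplus HLb (derivWithin (fun x => φ (t₀, x)) (Set.Iic 0) 0))
        (Hminus HRb (derivWithin (fun x => φ (t₀, x)) (Set.Ici 0) 0))) ≤ 0)

/-- Viscosity supersolution of the junction problem with flux limiter `A`. -/
def IsJunctionSupersol (HLb HRb : ℝ → ℝ) (A T : ℝ) (u : ℝ → ℝ → ℝ) : Prop :=
  ∀ φ : ℝ × ℝ → ℝ, IsPiecewiseC1 φ → ∀ t₀ x₀ : ℝ, 0 < t₀ → t₀ < T →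
    IsLocalMinOn (fun q : ℝ × ℝ => u q.1 q.2 - φ q) (Set.Ioo 0 T ×ˢ Set.univ) (t₀, x₀) →
    (x₀ < 0 → 0 ≤ deriv (fun t => φ (t, x₀)) t₀ + HLb (deriv (fun x => φ (t₀, x)) x₀)) ∧
    (0 < x₀ → 0 ≤ deriv (fun t => φ (t, x₀)) t₀ + HRb (deriv (fun x => φ (t₀, x)) x₀)) ∧
    (x₀ = 0 → 0 ≤ deriv (fun t => φ (t, 0)) t₀ +
      max A (max (Hplus HLb (derivWithin (fun x => φ (t₀, x)) (Set.Iic 0) 0))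
        (Hminus HRb (derivWithin (fun x => φ (t₀, x)) (Set.Ici 0) 0))))

/-- Solution of the limit junction problem with initial datum `u₀`. -/
def IsJunctionSol (HLb HRb : ℝ → ℝ) (A T : ℝ) (u₀ : ℝ → ℝ) (u : ℝ → ℝ → ℝ) : Prop :=
  ContinuousOn (fun q : ℝ × ℝ => u q.1 q.2) (Set.Ico 0 T ×ˢ Set.univ) ∧
  (∀ y, u 0 y = u₀ y) ∧
  IsJunctionSubsol HLb HRb A T u ∧ IsJunctionSupersol HLb HRb A T u

/-- Auxiliary: any globally Lipschitz viscosity subsolution of `H(Dv,y,ω) ≤ s` forces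
`H(0,y₀,ω) ≤ s` at every point, thanks to (H4) and (H6). -/
lemma aux_H0_le [MeasurableSpace Ω] (H : ℝ → ℝ → Ω → ℝ) (hH : HamHyp H)
    (ω : Ω) (s : ℝ) (v : ℝ → ℝ) (hv : IsLip v)
    (hsub : IsViscSubsol (fun p y => H p y ω) s Set.univ v) (y₀ : ℝ) :
    H 0 y₀ ω ≤ s := by
  obtain ⟨Kv, hKv⟩ := hv
  set K' : ℝ := max (Kv : ℝ) 1 with hK'def
  have hK'1 : (1:ℝ) ≤ K' := le_max_right _ _
  have hK'0 : (0:ℝ) < K' := lt_of_lt_of_le one_pos hK'1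
  have hvlip : ∀ a b : ℝ, |v a - v b| ≤ K' * |a - b| := by
    intro a b
    have h1 := hKv.dist_le_mul a b
    rw [Real.dist_eq, Real.dist_eq] at h1
    have h2 : (Kv:ℝ) * |a - b| ≤ K' * |a - b| :=
      mul_le_mul_of_nonneg_right (le_max_left _ _) (abs_nonneg _)
    linarith
  obtain ⟨w, hwmono, hw0, hwc, hwmod⟩ := hH.modulus
  by_contra hcon
  push_neg at hcon
  set η := (H 0 y₀ ω - s) / 2 with hηdef
  have hη : 0 < η := by rw [hηdef]; linarith
  obtain ⟨δ₀, hδ₀, hδ₀w⟩ := Metric.continuousAt_iff.1 hwc η hη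
  set N : ℝ := K' / δ₀ + 1 with hNdef
  have hN1 : (1:ℝ) ≤ N := by
    have : 0 ≤ K' / δ₀ := div_nonneg (le_of_lt hK'0) (le_of_lt hδ₀)
    rw [hNdef]; linarith
  have hN0 : (0:ℝ) < N := by linarith
  have hKN : K' / N < δ₀ := by
    rw [div_lt_iff₀ hN0]
    have h1 : δ₀ * N = K' + δ₀ := by rw [hNdef]; field_simp
    linarith
  set φ : ℝ → ℝ := fun y => N * (y - y₀) ^ 2 with hφdef
  have hφc : ContDiff ℝ 1 φ := by
    apply ContDiff.mul contDiff_const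
    exact (contDiff_id.sub contDiff_const).pow 2
  have hvc : Continuous v := hKv.continuous
  have hcont : Continuous fun y => v y - φ y := by
    apply hvc.sub
    rw [hφdef]; continuity
  obtain ⟨y₁, hy₁mem, hy₁max⟩ :=
    isCompact_Icc.exists_isMaxOn (s := Set.Icc (y₀ - K') (y₀ + K'))
      ⟨y₀, by constructor <;> linarith⟩ hcont.continuousOn
  have hy₀v : v y₀ - φ y₀ ≤ v y₁ - φ y₁ :=
    hy₁max (by constructor <;> linarith)
  have hφy₀ : φ y₀ = 0 := by rw [hφdef]; simp
  have hglob : ∀ y, v y - φ y ≤ v y₁ - φ y₁ := by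
    intro y
    by_cases hy : y ∈ Set.Icc (y₀ - K') (y₀ + K')
    · exact hy₁max hy
    · have habs : K' ≤ |y - y₀| := by
        rw [Set.mem_Icc] at hy
        push_neg at hy
        rcases le_or_gt (y₀ - K') y with h|h
        · have := hy h
          rw [abs_of_pos (by linarith)]; linarith
        · rw [abs_of_neg (by linarith)]; linarith
      have h1 : v y - v y₀ ≤ K' * |y - y₀| := (le_abs_self _).trans (hvlip y y₀)
      have h2 : K' * |y - y₀| ≤ φ y := by
        simp only [hφdef]
        have h3 : |y - y₀| ^ 2 = (y - y₀) ^ 2 := sq_abs _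
        nlinarith [abs_nonneg (y - y₀), mul_le_mul_of_nonneg_right habs (abs_nonneg (y - y₀)),
          mul_nonneg (by linarith : (0:ℝ) ≤ N - 1) (sq_nonneg (y - y₀))]
      have h4 : v y - φ y ≤ v y₀ := by linarith
      linarith
  have hloc : IsLocalMaxOn (fun y => v y - φ y) Set.univ y₁ :=
    Filter.Eventually.of_forall hglob
  have hkey : H (deriv φ y₁) y₁ ω ≤ s := hsub φ hφc y₁ (Set.mem_univ _) hloc
  have h1 : H 0 y₁ ω ≤ s := le_trans (hH.min_at_zero _ _ _) hkey
  have hq : N * (y₁ - y₀) ^ 2 ≤ K' * |y₁ - y₀| := by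
    have h3 : v y₁ - v y₀ ≤ K' * |y₁ - y₀| := (le_abs_self _).trans (hvlip _ _)
    have h5 : φ y₁ = N * (y₁ - y₀) ^ 2 := by simp only [hφdef]
    linarith [hy₀v]
  have hdist : |y₁ - y₀| ≤ K' / N := by
    by_contra hd; push_neg at hd
    rw [div_lt_iff₀ hN0] at hd
    have ht0 : 0 < |y₁ - y₀| := by nlinarith
    have h9 := mul_lt_mul_of_pos_right hd ht0
    nlinarith [sq_abs (y₁ - y₀)]
  have hmod := hwmod 0 y₁ y₀ ω
  have harg : |y₁ - y₀| * (1 + |(0:ℝ)|) = |y₁ - y₀| := by simp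
  rw [harg] at hmod
  have hwsmall : w (|y₁ - y₀|) < η := by
    have hlt : dist (|y₁ - y₀|) 0 < δ₀ := by
      rw [Real.dist_eq, sub_zero, abs_abs]
      exact lt_of_le_of_lt hdist hKN
    have h6 := hδ₀w hlt
    rw [Real.dist_eq, hw0, sub_zero] at h6
    exact lt_of_le_of_lt (le_abs_self _) h6
  have h7 : H 0 y₀ ω - H 0 y₁ ω ≤ w (|y₁ - y₀|) := (le_abs_self _).trans hmod
  rw [hηdef] at hwsmall
  linarith

set_option maxHeartbeats 1000000 in
/-- existence of a globally Lipschitz viscosity solution of the metric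
problem `H(Dm, y, ω) = μ` in `ℝ \ {0}`, `m(0) = 0`, for every `μ ≥ Ã(ω)`. -/
theorem metric_problem_existence [MeasurableSpace Ω] (H : ℝ → ℝ → Ω → ℝ)
    (hH : HamHyp H) (ω : Ω) (μ : ℝ) (hμ : fluxLimiter H ω ≤ μ) :
    ∃ m : ℝ → ℝ, IsLip m ∧ m 0 = 0 ∧
      IsViscSol (fun p y => H p y ω) μ ({(0 : ℝ)}ᶜ) m := by
  classical
  obtain ⟨K₀, hK₀⟩ := hH.lip_p
  set K' : ℝ := max (K₀ : ℝ) 1 with hK'def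
  have hK'1 : (1:ℝ) ≤ K' := le_max_right _ _
  have hK'0 : (0:ℝ) < K' := lt_of_lt_of_le one_pos hK'1
  have hlipH : ∀ p r y : ℝ, |H p y ω - H r y ω| ≤ K' * |p - r| := by
    intro p r y
    have h1 := (hK₀ y ω).dist_le_mul p r
    rw [Real.dist_eq, Real.dist_eq] at h1
    exact le_trans h1 (mul_le_mul_of_nonneg_right (le_max_left _ _) (abs_nonneg _))
  obtain ⟨w, hwmono, hw0, hwc, hwmod⟩ := hH.modulus
  obtain ⟨c₀, C₀, γ, hc₀, hC₀, hγ, hbd⟩ := hH.bounds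
  -- `H(-γ, y, ω') = 0`
  have hHγ : ∀ y : ℝ, H (-γ) y ω = 0 := by
    intro y
    have h := hbd (-γ) y ω
    have h0 : |(-γ) + γ| = 0 := by simp
    rw [h0] at h
    have h1 := h.1; have h2 := h.2
    rw [mul_zero] at h1 h2
    linarith
  simp only [fluxLimiter] at hμ
  set S : Set ℝ :=
    {μ' : ℝ | ∃ v : ℝ → ℝ, IsLip v ∧ IsViscSubsol (fun p y => H p y ω) μ' Set.univ v}
    with hSdef
  -- `0 ∈ S` via `v(y) = -γ y`
  have h0S : (0:ℝ) ∈ S := by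
    refine ⟨fun y => -γ * y, ⟨Real.toNNReal γ, ?_⟩, ?_⟩
    · apply LipschitzWith.of_dist_le_mul
      intro a b
      rw [Real.dist_eq, Real.dist_eq, Real.coe_toNNReal _ (le_of_lt hγ)]
      have h3 : -γ * a - -γ * b = -γ * (a - b) := by ring
      rw [h3, abs_mul, abs_neg, abs_of_pos hγ]
    · intro φ hφc y₀ _ hmax
      have hmax2 : IsMaxFilter (fun y => -γ * y - φ y) (𝓝[Set.univ] y₀) y₀ := hmax
      rw [nhdsWithin_univ] at hmax2
      have hmax' : IsLocalMax (fun y => -γ * y - φ y) y₀ := hmax2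
      have hd : deriv (fun y => -γ * y - φ y) y₀ = 0 := hmax'.deriv_eq_zero
      have hφd : DifferentiableAt ℝ φ y₀ := (hφc.differentiable one_ne_zero).differentiableAt
      have hvd : DifferentiableAt ℝ (fun y : ℝ => -γ * y) y₀ := by fun_prop
      rw [deriv_fun_sub hvd hφd] at hd
      have hdv : deriv (fun y : ℝ => -γ * y) y₀ = -γ := by
        have := ((hasDerivAt_id y₀).const_mul (-γ)).deriv
        simpa using this
      rw [hdv] at hd
      have hder : deriv φ y₀ = -γ := by linarith
      show H (deriv φ y₀) y₀ ω ≤ 0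
      rw [hder, hHγ y₀]
  -- `S` is bounded below
  have hbddS : BddBelow S := by
    refine ⟨-(c₀ * γ), fun s hs => ?_⟩
    obtain ⟨v, hvlip, hvsub⟩ := hs
    have h1 := aux_H0_le H hH ω s v hvlip hvsub 0
    have h2 := (hbd 0 0 ω).1
    have h3 : |(0:ℝ) + γ| = γ := by rw [zero_add, abs_of_pos hγ]
    rw [h3] at h2
    linarith
  -- `H(0, y, ω) ≤ μ` for every `y`
  have hH0 : ∀ y : ℝ, H 0 y ω ≤ μ := by
    intro y
    by_contra hcy; push_neg at hcy
    have hη : (0:ℝ) < (H 0 y ω - μ) / 2 := by linarith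
    have hlt : sInf S < μ + (H 0 y ω - μ) / 2 := lt_of_le_of_lt hμ (by linarith)
    obtain ⟨s, hsS, hs⟩ := (csInf_lt_iff hbddS ⟨0, h0S⟩).1 hlt
    obtain ⟨v, hvlip, hvsub⟩ := hsS
    have := aux_H0_le H hH ω s v hvlip hvsub y
    linarith
  -- coercivity radius
  obtain ⟨R₀, hR₀⟩ := hH.coercive (μ + 1)
  set R : ℝ := max R₀ 1 with hRdef
  have hR1 : (1:ℝ) ≤ R := le_max_right _ _
  have hR0 : (0:ℝ) < R := by linarith
  have hRsmall : ∀ p y : ℝ, H p y ω ≤ μ → |p| < R := by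
    intro p y hp
    by_contra hc; push_neg at hc
    have := hR₀ p y ω (le_trans (le_max_left _ _) hc)
    linarith
  -- the maximal admissible slope
  set Sy : ℝ → Set ℝ := fun y => {p : ℝ | 0 ≤ p ∧ p ≤ R ∧ H p y ω ≤ μ} with hSydef
  have hmem0 : ∀ y, (0:ℝ) ∈ Sy y := fun y => ⟨le_refl 0, by linarith, hH0 y⟩
  have hbddA : ∀ y, BddAbove (Sy y) := fun y => ⟨R, fun p hp => hp.2.1⟩
  set pp : ℝ → ℝ := fun y => sSup (Sy y) with hppdef
  have hpp0 : ∀ y, 0 ≤ pp y := fun y => le_csSup (hbddA y) (hmem0 y)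
  have hppR : ∀ y, pp y ≤ R := fun y => csSup_le ⟨0, hmem0 y⟩ (fun p hp => hp.2.1)
  have hppmem : ∀ y, pp y ∈ Sy y := by
    intro y
    have hcl : IsClosed (Sy y) := by
      have hset : Sy y = Set.Icc 0 R ∩ (fun p => H p y ω) ⁻¹' Set.Iic μ := by
        ext p
        simp only [hSydef, Set.mem_setOf_eq, Set.mem_inter_iff, Set.mem_Icc,
          Set.mem_preimage, Set.mem_Iic]
        tauto
      rw [hset]
      exact isClosed_Icc.inter (IsClosed.preimage (hK₀ y ω).continuous isClosed_Iic)
    exact hcl.csSup_mem ⟨0, hmem0 y⟩ (hbddA y)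
  have hHpp : ∀ y, H (pp y) y ω ≤ μ := fun y => (hppmem y).2.2
  have hC : ∀ y q : ℝ, 0 ≤ q → H q y ω ≤ μ → q ≤ pp y := by
    intro y q hq0 hq
    exact le_csSup (hbddA y) ⟨hq0, le_trans (le_abs_self q) (le_of_lt (hRsmall q y hq)), hq⟩
  have hConv : ∀ y q : ℝ, 0 ≤ q → q ≤ pp y → H q y ω ≤ μ := by
    intro y q hq0 hqp
    rcases eq_or_lt_of_le (hpp0 y) with h|h
    · have hq : q = 0 := le_antisymm (h ▸ hqp) hq0
      rw [hq]; exact hH0 y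
    · have ht0 : 0 ≤ q / pp y := div_nonneg hq0 (le_of_lt h)
      have ht1 : q / pp y ≤ 1 := (div_le_one h).2 hqp
      have h1t : (0:ℝ) ≤ 1 - q / pp y := by linarith
      have hsum : q / pp y + (1 - q / pp y) = 1 := by ring
      have hcv := (hH.convex_p y ω).2 (Set.mem_univ (pp y)) (Set.mem_univ (0:ℝ))
        ht0 h1t hsum
      have harg : (q / pp y) • pp y + (1 - q / pp y) • (0:ℝ) = q := by
        simp only [smul_eq_mul, mul_zero, add_zero]
        field_simp
      rw [harg] at hcv
      simp only [smul_eq_mul] at hcv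
      have h5 : (q / pp y) * H (pp y) y ω ≤ (q / pp y) * μ :=
        mul_le_mul_of_nonneg_left (hHpp y) ht0
      have h6 : (1 - q / pp y) * H 0 y ω ≤ (1 - q / pp y) * μ :=
        mul_le_mul_of_nonneg_left (hH0 y) (by linarith)
      nlinarith
  -- measurability of `pp`
  have hmeasH : ∀ q : ℝ, Measurable (fun y => H q y ω) := fun q =>
    hH.meas.comp (measurable_const.prodMk (measurable_id.prodMk measurable_const))
  have hppmeas : Measurable pp := by
    haveI hne : Nonempty {q : ℚ // 0 ≤ (q:ℝ) ∧ (q:ℝ) ≤ R} :=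
      ⟨⟨0, by norm_num, by norm_num; linarith⟩⟩
    set f : {q : ℚ // 0 ≤ (q:ℝ) ∧ (q:ℝ) ≤ R} → ℝ → ℝ :=
      fun q y => if H (q.1 : ℝ) y ω ≤ μ then (q.1 : ℝ) else 0 with hfdef
    have hfmeas : ∀ q, Measurable (f q) := fun q =>
      Measurable.ite (measurableSet_le (hmeasH _) measurable_const)
        measurable_const measurable_const
    have hfbdd : ∀ y, BddAbove (Set.range fun q => f q y) := by
      intro y
      refine ⟨R, ?_⟩
      rintro x ⟨q, rfl⟩
      by_cases hcond : H (q.1 : ℝ) y ω ≤ μ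
      · simp only [hfdef, if_pos hcond]; exact q.2.2
      · simp only [hfdef, if_neg hcond]; linarith
    have heq : pp = fun y => ⨆ q, f q y := by
      funext y
      apply le_antisymm
      · apply csSup_le ⟨0, hmem0 y⟩
        intro p hp
        obtain ⟨hp0, hpR, hpH⟩ := hp
        have hple : p ≤ pp y := le_csSup (hbddA y) ⟨hp0, hpR, hpH⟩
        by_contra hlt; push_neg at hlt
        have h0le : (0:ℝ) ≤ ⨆ q, f q y := by
          have h8 := le_ciSup (hfbdd y)
            (⟨0, by norm_num, by norm_num; linarith⟩ : {q : ℚ // 0 ≤ (q:ℝ) ∧ (q:ℝ) ≤ R})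
          simpa [hfdef] using h8
        obtain ⟨q, hq1, hq2⟩ := exists_rat_btwn hlt
        have hq0 : 0 ≤ (q:ℝ) := le_trans h0le (le_of_lt hq1)
        have hqR : (q:ℝ) ≤ R := by linarith
        have hqH : H (q:ℝ) y ω ≤ μ := hConv y q hq0 (le_of_lt (lt_of_lt_of_le hq2 hple))
        have hval : f ⟨q, hq0, hqR⟩ y = (q:ℝ) := by simp only [hfdef, if_pos hqH]
        have hle := le_ciSup (hfbdd y) (⟨q, hq0, hqR⟩ : {q : ℚ // 0 ≤ (q:ℝ) ∧ (q:ℝ) ≤ R})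
        rw [hval] at hle
        linarith
      · apply ciSup_le
        intro q
        by_cases hcond : H (q.1 : ℝ) y ω ≤ μ
        · simp only [hfdef, if_pos hcond]; exact hC y q.1 q.2.1 hcond
        · simp only [hfdef, if_neg hcond]; exact hpp0 y
    rw [heq]
    exact Measurable.iSup hfmeas
  -- integrability
  have hint : ∀ a b : ℝ, IntervalIntegrable pp volume a b := by
    intro a b
    rw [intervalIntegrable_iff]
    apply MeasureTheory.Integrable.mono' (g := fun _ => R)
    · exact integrableOn_const measure_Ioc_lt_top.ne
    · exact hppmeas.aestronglyMeasurable.restrict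
    · apply Filter.Eventually.of_forall
      intro x
      rw [Real.norm_eq_abs, abs_of_nonneg (hpp0 x)]
      exact hppR x
  set m : ℝ → ℝ := fun y => ∫ s in (0:ℝ)..y, pp s with hmdef
  have hmsub : ∀ x y : ℝ, m y - m x = ∫ s in x..y, pp s := by
    intro x y
    have h1 := intervalIntegral.integral_add_adjacent_intervals (hint 0 x) (hint x y)
    simp only [hmdef]
    linarith
  have hub : ∀ x y b : ℝ, x ≤ y → (∀ s ∈ Set.Icc x y, pp s ≤ b) →
      m y - m x ≤ b * (y - x) := by
    intro x y b hxy hb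
    rw [hmsub x y]
    calc ∫ s in x..y, pp s ≤ ∫ _s in x..y, b :=
          intervalIntegral.integral_mono_on hxy (hint x y) intervalIntegrable_const hb
      _ = b * (y - x) := by rw [intervalIntegral.integral_const, smul_eq_mul]; ring
  have hlbnd : ∀ x y b : ℝ, x ≤ y → (∀ s ∈ Set.Icc x y, b ≤ pp s) →
      b * (y - x) ≤ m y - m x := by
    intro x y b hxy hb
    rw [hmsub x y]
    calc b * (y - x) = ∫ _s in x..y, b := by
          rw [intervalIntegral.integral_const, smul_eq_mul]; ring
      _ ≤ ∫ s in x..y, pp s :=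
          intervalIntegral.integral_mono_on hxy intervalIntegrable_const (hint x y) hb
  have hmlip : IsLip m := by
    refine ⟨Real.toNNReal R, LipschitzWith.of_dist_le_mul ?_⟩
    intro x y
    rw [Real.dist_eq, Real.dist_eq, Real.coe_toNNReal _ (le_of_lt hR0)]
    have h1 : m x - m y = ∫ s in y..x, pp s := hmsub y x
    have h2 : ‖∫ s in y..x, pp s‖ ≤ R * |x - y| := by
      apply intervalIntegral.norm_integral_le_of_norm_le_const
      intro s _
      rw [Real.norm_eq_abs, abs_of_nonneg (hpp0 s)]
      exact hppR s
    rw [Real.norm_eq_abs] at h2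
    rw [h1]
    exact h2
  have hm0 : m 0 = 0 := by
    simp only [hmdef]
    exact intervalIntegral.integral_same
  refine ⟨m, hmlip, hm0, ?_, ?_⟩
  · -- subsolution
    intro φ hφc y₀ hy₀ hmax
    have hφd : DifferentiableAt ℝ φ y₀ := (hφc.differentiable one_ne_zero).differentiableAt
    show H (deriv φ y₀) y₀ ω ≤ μ
    set a := deriv φ y₀ with hadef
    have hnb : 𝓝[({(0:ℝ)}ᶜ : Set ℝ)] y₀ = 𝓝 y₀ :=
      nhdsWithin_eq_nhds.2 (isOpen_compl_singleton.mem_nhds hy₀)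
    have hmax2 : IsMaxFilter (fun y => m y - φ y) (𝓝[({(0:ℝ)}ᶜ : Set ℝ)] y₀) y₀ := hmax
    rw [hnb] at hmax2
    have hmax' : ∀ᶠ y in 𝓝 y₀, m y - φ y ≤ m y₀ - φ y₀ := hmax2
    obtain ⟨δ, hδ0, hδ⟩ := Metric.eventually_nhds_iff.1 hmax'
    have hslope : Tendsto (slope φ y₀) (𝓝[≠] y₀) (𝓝 a) :=
      hasDerivAt_iff_tendsto_slope.1 hφd.hasDerivAt
    have ha0 : 0 ≤ a := by
      have hev : ∀ᶠ y in 𝓝[>] y₀, 0 ≤ slope φ y₀ y := by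
        filter_upwards [Ioo_mem_nhdsGT_of_mem
          (Set.mem_Ico.2 (show y₀ ≤ y₀ ∧ y₀ < y₀ + δ from ⟨le_refl y₀, by linarith⟩))] with y hy
        have hd : m y - φ y ≤ m y₀ - φ y₀ := by
          apply hδ
          rw [Real.dist_eq, abs_of_pos (by linarith [hy.1] : (0:ℝ) < y - y₀)]
          linarith [hy.2]
        have hge : 0 ≤ m y - m y₀ := by
          rw [hmsub y₀ y]
          exact intervalIntegral.integral_nonneg (le_of_lt hy.1) (fun s _ => hpp0 s)
        rw [slope_def_field]
        apply div_nonneg (by linarith) (by linarith [hy.1])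
      have hmono : 𝓝[Set.Ioi y₀] y₀ ≤ 𝓝[({y₀}ᶜ : Set ℝ)] y₀ :=
        nhdsWithin_mono y₀ (fun y hy => Set.mem_compl_singleton_iff.2 (ne_of_gt hy))
      exact ge_of_tendsto (hslope.mono_left hmono) hev
    by_contra hcon; push_neg at hcon
    set ε := (H a y₀ ω - μ) / 2 with hεdef
    have hε : 0 < ε := by rw [hεdef]; linarith
    have hHa : H a y₀ ω = μ + 2 * ε := by rw [hεdef]; ring
    have hapos : 0 < a := by
      rcases lt_or_eq_of_le ha0 with h|h
      · exact h
      · exfalso; rw [← h] at hcon; exact absurd (hH0 y₀) (not_le.2 hcon)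
    set b := a - ε / K' with hbdef
    have hba : b < a := by
      have : 0 < ε / K' := div_pos hε hK'0
      rw [hbdef]; linarith
    have hkey : ∀ p : ℝ, b ≤ p → μ + ε ≤ H p y₀ ω := by
      intro p hp
      rcases le_or_gt p a with hpa|hpa
      · have h1 := hlipH a p y₀
        have h2 : |a - p| ≤ ε / K' := by
          rw [abs_of_nonneg (by linarith)]
          rw [hbdef] at hp; linarith
        have h3 : K' * |a - p| ≤ ε := by
          calc K' * |a - p| ≤ K' * (ε / K') :=
                mul_le_mul_of_nonneg_left h2 (le_of_lt hK'0)
            _ = ε := by field_simp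
        have h4 : H a y₀ ω - H p y₀ ω ≤ ε := le_trans (le_trans (le_abs_self _) h1) h3
        linarith
      · have hppos : 0 < p := lt_trans hapos hpa
        have ht0 : 0 < a / p := div_pos hapos hppos
        have ht1 : a / p ≤ 1 := by rw [div_le_one hppos]; linarith
        have h1t : (0:ℝ) ≤ 1 - a / p := by linarith
        have hsum : a / p + (1 - a / p) = 1 := by ring
        have hcv := (hH.convex_p y₀ ω).2 (Set.mem_univ p) (Set.mem_univ (0:ℝ))
          (le_of_lt ht0) h1t hsum
        have harg : (a / p) • p + (1 - a / p) • (0:ℝ) = a := by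
          simp only [smul_eq_mul, mul_zero, add_zero]
          field_simp
        rw [harg] at hcv
        simp only [smul_eq_mul] at hcv
        have h5 : (1 - a / p) * H 0 y₀ ω ≤ (1 - a / p) * μ :=
          mul_le_mul_of_nonneg_left (hH0 y₀) (by linarith)
        have h6 : (a / p) * μ + 2 * ε ≤ (a / p) * H p y₀ ω := by nlinarith
        have h8 : (a / p) * ε ≤ ε := mul_le_of_le_one_left (le_of_lt hε) ht1
        have h7 : (a / p) * (μ + ε) ≤ (a / p) * H p y₀ ω := by nlinarith
        exact le_of_mul_le_mul_left h7 ht0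
    obtain ⟨δ₀, hδ₀0, hδ₀w⟩ := Metric.continuousAt_iff.1 hwc ε hε
    set δ₁ := δ₀ / (1 + R) with hδ₁def
    have hδ₁0 : 0 < δ₁ := div_pos hδ₀0 (by linarith)
    have hclaim : ∀ y : ℝ, |y - y₀| < δ₁ → pp y ≤ b := by
      intro y hy
      by_contra hc; push_neg at hc
      have h1 : μ + ε ≤ H (pp y) y₀ ω := hkey (pp y) (le_of_lt hc)
      have hRpp : |pp y| ≤ R := by rw [abs_of_nonneg (hpp0 y)]; exact hppR y
      have harg : |y₀ - y| * (1 + |pp y|) < δ₀ := by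
        have h3 : |y₀ - y| < δ₁ := by rw [abs_sub_comm]; exact hy
        calc |y₀ - y| * (1 + |pp y|) ≤ |y₀ - y| * (1 + R) :=
              mul_le_mul_of_nonneg_left (by linarith) (abs_nonneg _)
          _ < δ₁ * (1 + R) := mul_lt_mul_of_pos_right h3 (by linarith)
          _ = δ₀ := by rw [hδ₁def]; field_simp
      have hw1 : |w (|y₀ - y| * (1 + |pp y|))| < ε := by
        have h9 := hδ₀w (show dist (|y₀ - y| * (1 + |pp y|)) 0 < δ₀ by
          rw [Real.dist_eq, sub_zero,
            abs_of_nonneg (mul_nonneg (abs_nonneg _) (by positivity))]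
          exact harg)
        rw [Real.dist_eq, hw0, sub_zero] at h9
        exact h9
      have hmod := hwmod (pp y) y₀ y ω
      have h4 : H (pp y) y₀ ω - H (pp y) y ω ≤ w (|y₀ - y| * (1 + |pp y|)) := by
        calc H (pp y) y₀ ω - H (pp y) y ω ≤ |H (pp y) y ω - H (pp y) y₀ ω| := by
              rw [abs_sub_comm]; exact le_abs_self _
          _ ≤ w (|y₀ - y| * (1 + |pp y|)) := hmod
      have h5 : w (|y₀ - y| * (1 + |pp y|)) < ε := lt_of_le_of_lt (le_abs_self _) hw1
      have h6 : μ < H (pp y) y ω := by linarith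
      exact absurd (hHpp y) (not_le.2 h6)
    set δ₂ := min δ δ₁ with hδ₂def
    have hδ₂0 : 0 < δ₂ := lt_min hδ0 hδ₁0
    have hev : ∀ᶠ y in 𝓝[<] y₀, slope φ y₀ y ≤ b := by
      filter_upwards [Ioo_mem_nhdsLT_of_mem
        (Set.mem_Ioc.2 (show y₀ - δ₂ < y₀ ∧ y₀ ≤ y₀ from ⟨by linarith, le_refl y₀⟩))] with y hy
      have hyd : |y - y₀| < δ₂ := by
        rw [abs_of_neg (by linarith [hy.2] : y - y₀ < 0)]
        linarith [hy.1]
      have h1 : m y - φ y ≤ m y₀ - φ y₀ := by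
        apply hδ
        rw [Real.dist_eq]
        exact lt_of_lt_of_le hyd (min_le_left _ _)
      have h2 : m y₀ - m y ≤ b * (y₀ - y) := by
        apply hub y y₀ b (le_of_lt hy.2)
        intro s hs
        apply hclaim
        rw [abs_of_nonpos (by linarith [hs.2] : s - y₀ ≤ 0)]
        have h10 := hs.1
        have h11 := hy.1
        have h12 : δ₂ ≤ δ₁ := min_le_right _ _
        linarith
      rw [slope_def_field, div_le_iff_of_neg (by linarith [hy.2] : y - y₀ < 0)]
      linarith
    have hmono : 𝓝[Set.Iio y₀] y₀ ≤ 𝓝[({y₀}ᶜ : Set ℝ)] y₀ :=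
      nhdsWithin_mono y₀ (fun y hy => Set.mem_compl_singleton_iff.2 (ne_of_lt hy))
    have hfin : a ≤ b := le_of_tendsto (hslope.mono_left hmono) hev
    linarith
  · -- supersolution
    intro φ hφc y₀ hy₀ hmin
    have hφd : DifferentiableAt ℝ φ y₀ := (hφc.differentiable one_ne_zero).differentiableAt
    show μ ≤ H (deriv φ y₀) y₀ ω
    set a := deriv φ y₀ with hadef
    have hnb : 𝓝[({(0:ℝ)}ᶜ : Set ℝ)] y₀ = 𝓝 y₀ :=
      nhdsWithin_eq_nhds.2 (isOpen_compl_singleton.mem_nhds hy₀)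
    have hmin2 : IsMinFilter (fun y => m y - φ y) (𝓝[({(0:ℝ)}ᶜ : Set ℝ)] y₀) y₀ := hmin
    rw [hnb] at hmin2
    have hmin' : ∀ᶠ y in 𝓝 y₀, m y₀ - φ y₀ ≤ m y - φ y := hmin2
    obtain ⟨δ, hδ0, hδ⟩ := Metric.eventually_nhds_iff.1 hmin'
    have hslope : Tendsto (slope φ y₀) (𝓝[≠] y₀) (𝓝 a) :=
      hasDerivAt_iff_tendsto_slope.1 hφd.hasDerivAt
    by_contra hcon; push_neg at hcon
    set ε := μ - H a y₀ ω with hεdef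
    have hε : 0 < ε := by rw [hεdef]; linarith
    set q := a + ε / (2 * K') with hqdef
    have hqa : a < q := by
      have : 0 < ε / (2 * K') := div_pos hε (by linarith)
      rw [hqdef]; linarith
    have hq1 : H q y₀ ω ≤ μ - ε / 2 := by
      have h1 := hlipH q a y₀
      have h2 : |q - a| = ε / (2 * K') := by
        rw [hqdef]
        simp only [add_sub_cancel_left]
        rw [abs_of_pos (div_pos hε (by linarith))]
      have h3 : K' * (ε / (2 * K')) = ε / 2 := by field_simp
      have h4 : H q y₀ ω - H a y₀ ω ≤ ε / 2 := by
        have h5 := le_trans (le_abs_self _) h1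
        rw [h2, h3] at h5
        exact h5
      rw [hεdef] at *
      linarith
    obtain ⟨δ₀, hδ₀0, hδ₀w⟩ := Metric.continuousAt_iff.1 hwc (ε/2) (by linarith)
    set δ₁ := δ₀ / (1 + |q|) with hδ₁def
    have hδ₁0 : 0 < δ₁ := div_pos hδ₀0 (by positivity)
    have hclaim : ∀ y : ℝ, |y - y₀| < δ₁ → q ≤ pp y := by
      intro y hy
      have hHqy : H q y ω ≤ μ := by
        have hmod := hwmod q y₀ y ω
        have harg : |y₀ - y| * (1 + |q|) < δ₀ := by
          calc |y₀ - y| * (1 + |q|) < δ₁ * (1 + |q|) :=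
                mul_lt_mul_of_pos_right (by rw [abs_sub_comm]; exact hy) (by positivity)
            _ = δ₀ := by rw [hδ₁def]; field_simp
        have hw1 := hδ₀w (show dist (|y₀ - y| * (1 + |q|)) 0 < δ₀ by
          rw [Real.dist_eq, sub_zero,
            abs_of_nonneg (mul_nonneg (abs_nonneg _) (by positivity))]
          exact harg)
        rw [Real.dist_eq, hw0, sub_zero] at hw1
        have h5 : H q y ω - H q y₀ ω ≤ w (|y₀ - y| * (1 + |q|)) :=
          le_trans (le_abs_self _) hmod
        have h6 : w (|y₀ - y| * (1 + |q|)) < ε / 2 := lt_of_le_of_lt (le_abs_self _) hw1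
        linarith
      rcases le_or_gt q 0 with h|h
      · linarith [hpp0 y]
      · exact hC y q (le_of_lt h) hHqy
    set δ₂ := min δ δ₁ with hδ₂def
    have hδ₂0 : 0 < δ₂ := lt_min hδ0 hδ₁0
    have hev : ∀ᶠ y in 𝓝[<] y₀, q ≤ slope φ y₀ y := by
      filter_upwards [Ioo_mem_nhdsLT_of_mem
        (Set.mem_Ioc.2 (show y₀ - δ₂ < y₀ ∧ y₀ ≤ y₀ from ⟨by linarith, le_refl y₀⟩))] with y hy
      have hyd : |y - y₀| < δ₂ := by
        rw [abs_of_neg (by linarith [hy.2] : y - y₀ < 0)]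
        linarith [hy.1]
      have h1 : m y₀ - φ y₀ ≤ m y - φ y := by
        apply hδ
        rw [Real.dist_eq]
        exact lt_of_lt_of_le hyd (min_le_left _ _)
      have h2 : q * (y₀ - y) ≤ m y₀ - m y := by
        apply hlbnd y y₀ q (le_of_lt hy.2)
        intro s hs
        apply hclaim
        rw [abs_of_nonpos (by linarith [hs.2] : s - y₀ ≤ 0)]
        have h10 := hs.1
        have h11 := hy.1
        have h12 : δ₂ ≤ δ₁ := min_le_right _ _
        linarith
      rw [slope_def_field, le_div_iff_of_neg (by linarith [hy.2] : y - y₀ < 0)]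
      linarith
    have hmono : 𝓝[Set.Iio y₀] y₀ ≤ 𝓝[({y₀}ᶜ : Set ℝ)] y₀ :=
      nhdsWithin_mono y₀ (fun y hy => Set.mem_compl_singleton_iff.2 (ne_of_lt hy))
    have hfin : q ≤ a := ge_of_tendsto (hslope.mono_left hmono) hev
    linarith
end
end

section
/- Assume H_L and H_R satisfy (H1)–(H6), the stationarity (H8) and the unit range of dependence (H9). Then there exists an event Ω₁ of full probability such that for all ω ∈ Ω₁: sup_{y∈[1,+∞)} H_R(0,y,ω) = sup_{y∈ℝ} H_R(0,y,ω) and sup_{y∈(−∞,−1]} H_L(0,y,ω) = sup_{y∈ℝ} H_L(0,y,ω). -/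
open MeasureTheory ProbabilityTheory Set Filter Topology

noncomputable section

variable {Ω : Type*}

/-- If `f` is continuous and `f '' s` is bounded above, then for `x` in the closure of `s`
we still have `f x ≤ sSup (f '' s)`. -/
lemma aux_le_csSup_closure {f : ℝ → ℝ} (hf : Continuous f) {s : Set ℝ}
    (hb : BddAbove (f '' s)) {x : ℝ} (hx : x ∈ closure s) : f x ≤ sSup (f '' s) := by
  have hfx : f x ∈ closure (f '' s) := map_mem_closure hf hx (mapsTo_image f s)
  have h1 : f '' s ⊆ Set.Iic (sSup (f '' s)) := fun z hz => le_csSup hb hz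
  exact closure_minimal h1 isClosed_Iic hfx

/-- Continuity in `y` of `H 0 y ω`, from the modulus-of-continuity hypothesis (H5). -/
lemma aux_cont_zero [MeasurableSpace Ω] {H : ℝ → ℝ → Ω → ℝ} (h : HamHyp H) (ω : Ω) :
    Continuous fun y => H 0 y ω := by
  obtain ⟨w, hmono, hw0, hwc, hineq⟩ := h.modulus
  rw [Metric.continuous_iff]
  intro x ε hε
  obtain ⟨δ, hδ, hδ'⟩ := Metric.continuousAt_iff.1 hwc ε hε
  refine ⟨δ, hδ, fun y hy => ?_⟩
  have h1 : |H 0 y ω - H 0 x ω| ≤ w (|x - y| * (1 + |(0 : ℝ)|)) := hineq 0 x y ω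
  have h2 : dist (|x - y| * (1 + |(0 : ℝ)|)) 0 < δ := by
    have : |x - y| = dist y x := by rw [Real.dist_eq, abs_sub_comm]
    simp only [abs_zero, add_zero, mul_one, Real.dist_eq, sub_zero, abs_abs]
    rw [abs_sub_comm]
    exact lt_of_le_of_lt (le_of_eq rfl) hy
  have h3 := hδ' h2
  rw [hw0, Real.dist_eq, sub_zero] at h3
  have h4 : w (|x - y| * (1 + |(0 : ℝ)|)) ≤ |w (|x - y| * (1 + |(0 : ℝ)|))| := le_abs_self _
  rw [Real.dist_eq]
  exact lt_of_le_of_lt (h1.trans h4) h3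

/-- Key deterministic/ergodic-theoretic lemma: for a bounded stationary process `g`,
almost surely the supremum of `g ω` over `[1, ∞)` equals the supremum over `ℝ`. -/
lemma aux_key [MeasurableSpace Ω] (P : Measure Ω) [IsProbabilityMeasure P]
    (σ : ℝ → Ω → Ω) (hσ : ∀ z, MeasurePreserving (σ z) P P)
    (g : Ω → ℝ → ℝ) (C : ℝ)
    (hbd : ∀ ω y, |g ω y| ≤ C)
    (hstat : ∀ (ω : Ω) (z y : ℝ), g (σ z ω) y = g ω (y + z))
    (hmeas : ∀ a b : ℝ, Measurable fun ω => sSup (g ω '' Set.Ico a b)) :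
    ∃ Ω₁ : Set Ω, MeasurableSet Ω₁ ∧ P Ω₁ = 1 ∧ ∀ ω ∈ Ω₁,
      sSup (g ω '' Set.Ici 1) = ⨆ y, g ω y := by
  set F : ℝ → Ω → ℝ := fun a ω => sSup (g ω '' Set.Ici a) with hF
  have hub : ∀ (ω : Ω) (s : Set ℝ), ∀ r ∈ g ω '' s, r ≤ C := by
    rintro ω s r ⟨y, -, rfl⟩; exact (abs_le.1 (hbd ω y)).2
  have hbdd : ∀ (ω : Ω) (s : Set ℝ), BddAbove (g ω '' s) :=
    fun ω s => ⟨C, fun r hr => hub ω s r hr⟩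
  have hFle : ∀ a ω, F a ω ≤ C :=
    fun a ω => csSup_le ⟨g ω a, ⟨a, le_refl a, rfl⟩⟩ (hub ω _)
  have hFge : ∀ a ω, -C ≤ F a ω := fun a ω =>
    le_trans (neg_le_of_abs_le (hbd ω a)) (le_csSup (hbdd ω _) ⟨a, le_refl a, rfl⟩)
  have hFmono : ∀ (a b : ℝ) (ω : Ω), a ≤ b → F b ω ≤ F a ω := fun a b ω hab =>
    csSup_le_csSup (hbdd ω _) ⟨g ω b, ⟨b, le_refl b, rfl⟩⟩
      (Set.image_mono (Set.Ici_subset_Ici.2 hab))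
  have hrep : ∀ (a : ℝ) (ω : Ω),
      F a ω = ⨆ n : ℕ, sSup (g ω '' Set.Ico a (a + (n + 1))) := by
    intro a ω
    have hne : ∀ n : ℕ, (g ω '' Set.Ico a (a + (n + 1))).Nonempty := by
      intro n
      refine ⟨g ω a, a, ⟨le_refl a, ?_⟩, rfl⟩
      have : (0 : ℝ) ≤ n := Nat.cast_nonneg n
      linarith
    have hbR : BddAbove (Set.range fun n : ℕ => sSup (g ω '' Set.Ico a (a + (n + 1)))) := by
      refine ⟨C, ?_⟩
      rintro r ⟨n, rfl⟩
      exact csSup_le (hne n) (hub ω _)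
    apply le_antisymm
    · refine csSup_le ⟨g ω a, a, le_refl a, rfl⟩ ?_
      rintro r ⟨y, hy, rfl⟩
      obtain ⟨n, hn⟩ := exists_nat_gt (y - a)
      have h1 : g ω y ≤ sSup (g ω '' Set.Ico a (a + (n + 1))) :=
        le_csSup (hbdd ω _) ⟨y, ⟨hy, by push_cast; linarith⟩, rfl⟩
      exact h1.trans (le_ciSup hbR n)
    · refine ciSup_le fun n => csSup_le_csSup (hbdd ω _) (hne n)
        (Set.image_mono Set.Ico_subset_Ici_self)
  have hFmeas : ∀ a : ℝ, Measurable (F a) := by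
    intro a
    have : F a = fun ω => ⨆ n : ℕ, sSup (g ω '' Set.Ico a (a + (n + 1))) :=
      funext fun ω => hrep a ω
    rw [this]
    exact Measurable.iSup fun n => hmeas a (a + (n + 1))
  have hFstat : ∀ (a : ℝ) (ω : Ω), F a ω = F 0 (σ a ω) := by
    intro a ω
    have himg : g (σ a ω) '' Set.Ici (0 : ℝ) = g ω '' Set.Ici a := by
      ext r
      constructor
      · rintro ⟨y, hy, rfl⟩
        refine ⟨y + a, ?_, (hstat ω a y).symm⟩
        simp only [Set.mem_Ici] at hy ⊢; linarith
      · rintro ⟨y, hy, rfl⟩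
        refine ⟨y - a, ?_, ?_⟩
        · simp only [Set.mem_Ici] at hy ⊢; linarith
        · rw [hstat ω a (y - a), sub_add_cancel]
    show sSup (g ω '' Set.Ici a) = sSup (g (σ a ω) '' Set.Ici 0)
    rw [himg]
  have hint : ∀ a : ℝ, Integrable (F a) P := by
    intro a
    refine (integrable_const C).mono' (hFmeas a).aestronglyMeasurable
      (ae_of_all _ fun ω => ?_)
    rw [Real.norm_eq_abs]
    exact abs_le.2 ⟨hFge a ω, hFle a ω⟩
  have hintegral : ∀ a : ℝ, ∫ ω, F a ω ∂P = ∫ ω, F 0 ω ∂P := by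
    intro a
    have h1 : (fun ω => F a ω) = fun ω => F 0 (σ a ω) := funext fun ω => hFstat a ω
    have hm : Measure.map (σ a) P = P := (hσ a).map_eq
    calc ∫ ω, F a ω ∂P = ∫ ω, F 0 (σ a ω) ∂P := by rw [h1]
      _ = ∫ x, F 0 x ∂(Measure.map (σ a) P) :=
          (integral_map (hσ a).measurable.aemeasurable
            (by rw [hm]; exact (hFmeas 0).aestronglyMeasurable)).symm
      _ = ∫ ω, F 0 ω ∂P := by rw [hm]
  set A : ℕ → Set Ω := fun n => {ω | F (-(n : ℝ)) ω = F 1 ω} with hA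
  have hAmeas : ∀ n, MeasurableSet (A n) := fun n =>
    measurableSet_eq_fun (hFmeas _) (hFmeas _)
  have hA1 : ∀ n, P (A n)ᶜ = 0 := by
    intro n
    have hle : -(n : ℝ) ≤ 1 := by
      have : (0 : ℝ) ≤ n := Nat.cast_nonneg n
      linarith
    have hnn : 0 ≤ fun ω => F (-(n : ℝ)) ω - F 1 ω :=
      fun ω => sub_nonneg.2 (hFmono _ _ ω hle)
    have hfi : Integrable (fun ω => F (-(n : ℝ)) ω - F 1 ω) P := (hint _).sub (hint _)
    have hz : ∫ ω, (F (-(n : ℝ)) ω - F 1 ω) ∂P = 0 := by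
      rw [integral_sub (hint _) (hint _), hintegral, hintegral (1 : ℝ), sub_self]
    have hae := (integral_eq_zero_iff_of_nonneg hnn hfi).1 hz
    have hae2 : ∀ᵐ ω ∂P, ω ∈ A n := by
      refine hae.mono fun ω hω => ?_
      have : F (-(n : ℝ)) ω - F 1 ω = 0 := hω
      simpa [hA, Set.mem_setOf_eq, sub_eq_zero] using this
    exact ae_iff.1 hae2
  refine ⟨⋂ n, A n, MeasurableSet.iInter hAmeas, ?_, ?_⟩
  · rw [← prob_compl_eq_zero_iff (MeasurableSet.iInter hAmeas), Set.compl_iInter]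
    exact measure_iUnion_null fun n => hA1 n
  · intro ω hω
    have hωn : ∀ n : ℕ, F (-(n : ℝ)) ω = F 1 ω := fun n => Set.mem_iInter.1 hω n
    have h1 : (⨆ y, g ω y) = F 1 ω := by
      apply le_antisymm
      · refine ciSup_le fun y => ?_
        obtain ⟨n, hn⟩ := exists_nat_ge (-y)
        calc g ω y ≤ F (-(n : ℝ)) ω :=
              le_csSup (hbdd ω _) ⟨y, by simp only [Set.mem_Ici]; linarith, rfl⟩
          _ = F 1 ω := hωn n
      · refine csSup_le_csSup ?_ ⟨g ω 1, 1, Set.mem_Ici.2 le_rfl, rfl⟩ (Set.image_subset_range _ _)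
        refine ⟨C, ?_⟩
        rintro r ⟨y, rfl⟩
        exact (abs_le.1 (hbd ω y)).2
    exact h1.symm

/-- almost surely, the supremum of `H_R(0,·,ω)` over `[1,∞)`
(resp. of `H_L(0,·,ω)` over `(-∞,-1]`) equals its supremum over `ℝ`. -/
theorem sup_attained_far_from_origin [MeasurableSpace Ω]
    (P : Measure Ω) [IsProbabilityMeasure P]
    (τ : ℝ → Ω → Ω) (hτ : ErgodicSetup P τ)
    (HL HR : ℝ → ℝ → Ω → ℝ)
    (hHL : HamHyp HL) (hHR : HamHyp HR)
    (hstatL : Stationary τ HL) (hstatR : Stationary τ HR)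
    (hdepL : UnitRangeDep P HL) (hdepR : UnitRangeDep P HR)
    (hmeasL : ∀ a b : ℝ, Measurable fun ω => sSup ((fun y => HL 0 y ω) '' Set.Ico a b))
    (hmeasR : ∀ a b : ℝ, Measurable fun ω => sSup ((fun y => HR 0 y ω) '' Set.Ico a b)) :
    ∃ Ω₁ : Set Ω, MeasurableSet Ω₁ ∧ P Ω₁ = 1 ∧ ∀ ω ∈ Ω₁,
      sSup ((fun y => HR 0 y ω) '' Set.Ici (1 : ℝ)) = (⨆ y : ℝ, HR 0 y ω) ∧
      sSup ((fun y => HL 0 y ω) '' Set.Iic (-1 : ℝ)) = (⨆ y : ℝ, HL 0 y ω) := by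
  -- bounds at p = 0
  obtain ⟨cR, CR, γR, hcR, hCR, hγR, hbR⟩ := hHR.bounds
  obtain ⟨cL, CL, γL, hcL, hCL, hγL, hbL⟩ := hHL.bounds
  have hboundR : ∀ (ω : Ω) (y : ℝ), |HR 0 y ω| ≤ max (cR * |γR|) (CR * |γR|) := by
    intro ω y
    have h := hbR 0 y ω
    rw [zero_add] at h
    refine abs_le.2 ⟨?_, ?_⟩
    · calc -max (cR * |γR|) (CR * |γR|) ≤ -(cR * |γR|) :=
            neg_le_neg (le_max_left _ _)
        _ ≤ HR 0 y ω := by linarith [h.1]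
    · exact h.2.trans (le_max_right _ _)
  have hboundL : ∀ (ω : Ω) (y : ℝ), |HL 0 y ω| ≤ max (cL * |γL|) (CL * |γL|) := by
    intro ω y
    have h := hbL 0 y ω
    rw [zero_add] at h
    refine abs_le.2 ⟨?_, ?_⟩
    · calc -max (cL * |γL|) (CL * |γL|) ≤ -(cL * |γL|) :=
            neg_le_neg (le_max_left _ _)
        _ ≤ HL 0 y ω := by linarith [h.1]
    · exact h.2.trans (le_max_right _ _)
  -- Right side: apply the key lemma directly.
  obtain ⟨ΩR, hmΩR, hPΩR, hΩR⟩ :=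
    aux_key P τ (fun z => hτ.preserving z) (fun ω y => HR 0 y ω) _
      (fun ω y => hboundR ω y)
      (fun ω z y => (hstatR 0 y z ω).symm)
      hmeasR
  -- Left side: apply the key lemma to `g ω y = HL 0 (-y) ω` and `σ z = τ (-z)`.
  have hstatL' : ∀ (ω : Ω) (z y : ℝ), HL 0 (-y) (τ (-z) ω) = HL 0 (-(y + z)) ω := by
    intro ω z y
    rw [neg_add]
    exact (hstatL 0 (-y) (-z) ω).symm
  have hmeasL' : ∀ a b : ℝ,
      Measurable fun ω => sSup ((fun y => HL 0 (-y) ω) '' Set.Ico a b) := by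
    intro a b
    rcases le_or_gt b a with h | h
    · have hemp : ∀ ω : Ω, sSup ((fun y => HL 0 (-y) ω) '' Set.Ico a b) = 0 := by
        intro ω
        rw [Set.Ico_eq_empty (not_lt.2 h), Set.image_empty, Real.sSup_empty]
      have : (fun ω => sSup ((fun y => HL 0 (-y) ω) '' Set.Ico a b)) = fun _ => (0 : ℝ) :=
        funext hemp
      rw [this]; exact measurable_const
    · have himg : ∀ ω : Ω,
          (fun y => HL 0 (-y) ω) '' Set.Ico a b
            = (fun y => HL 0 y ω) '' Set.Ioc (-b) (-a) := by
        intro ω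
        ext r
        constructor
        · rintro ⟨y, hy, rfl⟩
          exact ⟨-y, ⟨by simp only [Set.mem_Ico] at hy; linarith [hy.2],
            by simp only [Set.mem_Ico] at hy; linarith [hy.1]⟩, rfl⟩
        · rintro ⟨u, hu, rfl⟩
          refine ⟨-u, ⟨?_, ?_⟩, by simp⟩
          · simp only [Set.mem_Ioc] at hu; linarith [hu.2]
          · simp only [Set.mem_Ioc] at hu; linarith [hu.1]
      have hbddI : ∀ (ω : Ω) (s : Set ℝ), BddAbove ((fun y => HL 0 y ω) '' s) := by
        intro ω s
        refine ⟨max (cL * |γL|) (CL * |γL|), ?_⟩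
        rintro r ⟨y, -, rfl⟩
        exact (abs_le.1 (hboundL ω y)).2
      have hlt : -b < -a := neg_lt_neg h
      have hsup : ∀ ω : Ω,
          sSup ((fun y => HL 0 y ω) '' Set.Ioc (-b) (-a))
            = sSup ((fun y => HL 0 y ω) '' Set.Ico (-b) (-a)) := by
        intro ω
        have hcont : Continuous fun y => HL 0 y ω := aux_cont_zero hHL ω
        apply le_antisymm
        · refine csSup_le ⟨HL 0 (-a) ω, -a, ⟨hlt, le_refl _⟩, rfl⟩ ?_
          rintro r ⟨y, hy, rfl⟩
          refine aux_le_csSup_closure hcont (hbddI ω _) ?_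
          rw [closure_Ico hlt.ne]
          exact ⟨le_of_lt hy.1, hy.2⟩
        · refine csSup_le ⟨HL 0 (-b) ω, -b, ⟨le_refl _, hlt⟩, rfl⟩ ?_
          rintro r ⟨y, hy, rfl⟩
          refine aux_le_csSup_closure hcont (hbddI ω _) ?_
          rw [closure_Ioc hlt.ne]
          exact ⟨hy.1, le_of_lt hy.2⟩
      have : (fun ω => sSup ((fun y => HL 0 (-y) ω) '' Set.Ico a b))
          = fun ω => sSup ((fun y => HL 0 y ω) '' Set.Ico (-b) (-a)) :=
        funext fun ω => by rw [himg ω, hsup ω]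
      rw [this]
      exact hmeasL (-b) (-a)
  obtain ⟨ΩL, hmΩL, hPΩL, hΩL⟩ :=
    aux_key P (fun z => τ (-z)) (fun z => hτ.preserving (-z))
      (fun ω y => HL 0 (-y) ω) _
      (fun ω y => hboundL ω (-y))
      hstatL' hmeasL'
  refine ⟨ΩR ∩ ΩL, hmΩR.inter hmΩL, ?_, ?_⟩
  · rw [← prob_compl_eq_zero_iff (hmΩR.inter hmΩL), Set.compl_inter]
    refine measure_union_null ?_ ?_
    · exact (prob_compl_eq_zero_iff hmΩR).2 hPΩR
    · exact (prob_compl_eq_zero_iff hmΩL).2 hPΩL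
  · rintro ω ⟨hω1, hω2⟩
    refine ⟨hΩR ω hω1, ?_⟩
    have hLsup := hΩL ω hω2
    have himg2 : (fun y => HL 0 (-y) ω) '' Set.Ici (1 : ℝ)
        = (fun y => HL 0 y ω) '' Set.Iic (-1 : ℝ) := by
      ext r
      constructor
      · rintro ⟨y, hy, rfl⟩
        exact ⟨-y, by simp only [Set.mem_Ici] at hy; simp only [Set.mem_Iic]; linarith, rfl⟩
      · rintro ⟨u, hu, rfl⟩
        refine ⟨-u, ?_, by simp⟩
        simp only [Set.mem_Iic] at hu; simp only [Set.mem_Ici]; linarith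
    have hrange : Set.range (fun y => HL 0 (-y) ω) = Set.range fun y => HL 0 y ω := by
      ext r
      constructor
      · rintro ⟨y, rfl⟩; exact ⟨-y, rfl⟩
      · rintro ⟨y, rfl⟩; exact ⟨-y, by simp⟩
    calc sSup ((fun y => HL 0 y ω) '' Set.Iic (-1 : ℝ))
        = sSup ((fun y => HL 0 (-y) ω) '' Set.Ici (1 : ℝ)) := by rw [himg2]
      _ = ⨆ y, HL 0 (-y) ω := hLsup
      _ = ⨆ y : ℝ, HL 0 y ω := congrArg sSup hrange
end
end

section
/- Convergence of the approximated corrector at the origin: under the assumptions (H1)–(H6), (H8), (H9) and (H7-ε), for all ω ∈ Ω₀^{ε₀}, the unique bounded solution v^δ of δ v^δ + H(Dv^δ,y,ω) = 0 on ℝ satisfies δ v^δ(0,ω) → −Ā as δ → 0. -/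
open MeasureTheory ProbabilityTheory Set Filter Topology

noncomputable section

variable {Ω : Type*}

/-! ### Auxiliary lemmas for the proof -/

namespace CorrAux


/-- The smooth penalization `y ↦ √(1+(y-c)²) - 1`. -/
def gtest (c y : ℝ) : ℝ := Real.sqrt (1 + (y - c)^2) - 1

lemma sqrt_pos' (c y : ℝ) : 0 < Real.sqrt (1 + (y - c)^2) :=
  Real.sqrt_pos.2 (by positivity)

lemma one_le_sqrt' (c y : ℝ) : 1 ≤ Real.sqrt (1 + (y - c)^2) := by
  have h : (1:ℝ) = Real.sqrt 1 := (Real.sqrt_one).symm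
  rw [h]
  exact Real.sqrt_le_sqrt (by nlinarith [sq_nonneg (y - c)])

lemma gtest_nonneg (c y : ℝ) : 0 ≤ gtest c y := by
  have := one_le_sqrt' c y; unfold gtest; linarith

lemma gtest_self (c : ℝ) : gtest c c = 0 := by
  unfold gtest; simp

lemma gtest_ge (c y : ℝ) : |y - c| - 1 ≤ gtest c y := by
  have h : |y - c| = Real.sqrt ((y - c)^2) := (Real.sqrt_sq_eq_abs _).symm
  have h2 : Real.sqrt ((y - c)^2) ≤ Real.sqrt (1 + (y - c)^2) :=
    Real.sqrt_le_sqrt (by linarith)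
  unfold gtest; rw [h]; linarith

lemma gtest_hasDerivAt (c y : ℝ) :
    HasDerivAt (gtest c) ((y - c) / Real.sqrt (1 + (y - c)^2)) y := by
  have h1 : HasDerivAt (fun t : ℝ => 1 + (t - c)^2) (2 * (y - c)) y := by
    have : HasDerivAt (fun t : ℝ => (t - c)^2) (2 * (y - c)) y := by
      simpa using ((hasDerivAt_id y).sub_const c).fun_pow 2
    simpa using this.const_add 1
  have hx : (1 + (y - c)^2) ≠ 0 := by positivity
  have h2 := (Real.hasDerivAt_sqrt hx).comp y h1
  have h3 : HasDerivAt (fun t : ℝ => Real.sqrt (1 + (t - c)^2))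
      (1 / (2 * Real.sqrt (1 + (y - c)^2)) * (2 * (y - c))) y := h2
  have heq : 1 / (2 * Real.sqrt (1 + (y - c)^2)) * (2 * (y - c))
      = (y - c) / Real.sqrt (1 + (y - c)^2) := by
    have := (sqrt_pos' c y).ne'
    field_simp
  rw [heq] at h3
  exact h3.sub_const 1

lemma gtest_deriv_abs_le (c y : ℝ) : |(y - c) / Real.sqrt (1 + (y - c)^2)| ≤ 1 := by
  rw [abs_div, abs_of_pos (sqrt_pos' c y), div_le_one (sqrt_pos' c y)]
  calc |y - c| = Real.sqrt ((y - c)^2) := (Real.sqrt_sq_eq_abs _).symm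
    _ ≤ _ := Real.sqrt_le_sqrt (by linarith)

lemma ratio_mono {d t : ℝ} (hd : 0 ≤ d) (h : d ≤ |t|) :
    d / Real.sqrt (1 + d^2) ≤ |t| / Real.sqrt (1 + t^2) := by
  have hpd : (0:ℝ) < Real.sqrt (1 + d^2) := Real.sqrt_pos.2 (by positivity)
  have hpt : (0:ℝ) < Real.sqrt (1 + t^2) := Real.sqrt_pos.2 (by positivity)
  rw [div_le_div_iff₀ hpd hpt]
  have h1 : d * Real.sqrt (1 + t^2) = Real.sqrt (d^2 * (1 + t^2)) := by
    rw [Real.sqrt_mul (sq_nonneg d), Real.sqrt_sq hd]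
  have h2 : |t| * Real.sqrt (1 + d^2) = Real.sqrt (t^2 * (1 + d^2)) := by
    rw [Real.sqrt_mul (sq_nonneg t), Real.sqrt_sq_eq_abs]
  rw [h1, h2]
  apply Real.sqrt_le_sqrt
  have : d^2 ≤ t^2 := by
    have := sq_abs t
    nlinarith [abs_nonneg t]
  nlinarith

lemma gtest_contDiff (c B : ℝ) : ContDiff ℝ 1 (fun y => B * gtest c y) := by
  apply ContDiff.mul contDiff_const
  apply ContDiff.sub _ contDiff_const
  exact ContDiff.sqrt (by
    apply ContDiff.add contDiff_const
    exact (contDiff_id.sub contDiff_const).pow 2) (fun y => by positivity)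

lemma gtest_continuous (c : ℝ) : Continuous (gtest c) := by
  have := (gtest_contDiff c 1).continuous
  simpa using this

/-- attainment of the maximum of `v - B * gtest c` for bounded continuous `v`. -/
lemma exists_max_pen (v : ℝ → ℝ) (hv : Continuous v) (M : ℝ) (hM : ∀ y, |v y| ≤ M)
    (B : ℝ) (hB : 0 < B) (c : ℝ) :
    ∃ z, ∀ y, v y - B * gtest c y ≤ v z - B * gtest c z := by
  set f : ℝ → ℝ := fun y => v y - B * gtest c y with hf
  have hfc : Continuous f := hv.sub (continuous_const.mul (gtest_continuous c))
  have hM0 : 0 ≤ M := le_trans (abs_nonneg _) (hM 0)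
  set r : ℝ := (2*M + 2)/B + 1 with hr
  have hrpos : 0 < r := by positivity
  obtain ⟨z, hzI, hz⟩ := (isCompact_Icc (a := c - r) (b := c + r)).exists_isMaxOn
    ⟨c, by constructor <;> linarith⟩ hfc.continuousOn
  refine ⟨z, fun y => ?_⟩
  by_cases hy : y ∈ Icc (c - r) (c + r)
  · exact hz hy
  · have hyc : r < |y - c| := by
      rw [mem_Icc, not_and_or] at hy
      rcases hy with h | h
      · push_neg at h
        rw [abs_sub_comm, abs_of_pos (by linarith)]
        linarith
      · push_neg at h
        rw [abs_of_pos (by linarith)]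
        linarith
    have h1 : f y ≤ M - B * (|y - c| - 1) := by
      have hvy : v y ≤ M := (abs_le.mp (hM y)).2
      have hg : |y - c| - 1 ≤ gtest c y := gtest_ge c y
      have hmul : B * (|y - c| - 1) ≤ B * gtest c y :=
        mul_le_mul_of_nonneg_left hg (le_of_lt hB)
      simp only [hf]; linarith
    have h2 : M - B * (|y - c| - 1) < -M := by
      have hstep : (2*M+2)/B < |y - c| - 1 := by
        have : (2*M+2)/B + 1 < |y - c| := by rw [hr] at hyc; exact hyc
        linarith
      have : B * ((2*M+2)/B) < B * (|y - c| - 1) :=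
        mul_lt_mul_of_pos_left hstep hB
      have hBb : B * ((2*M+2)/B) = 2*M + 2 := by field_simp
      nlinarith
    have h3 : f c = v c := by simp [hf, gtest_self]
    have h4 : -M ≤ v c := (abs_le.mp (hM c)).1
    have : f y ≤ f c := by linarith
    exact le_trans this (hz ⟨by linarith, by linarith⟩)



/-- Pass from a max over an interval to `IsLocalMaxOn ... univ`. -/
lemma isLocalMaxOn_univ_of_Icc {f : ℝ → ℝ} {a b z : ℝ} (ha : a < z) (hb : z < b)
    (h : ∀ y ∈ Icc a b, f y ≤ f z) : IsLocalMaxOn f Set.univ z := by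
  have h1 : ∀ᶠ y in 𝓝 z, f y ≤ f z := by
    filter_upwards [Icc_mem_nhds ha hb] using h
  show ∀ᶠ y in 𝓝[Set.univ] z, f y ≤ f z
  rwa [nhdsWithin_univ]

lemma isLocalMaxOn_univ_of_forall {f : ℝ → ℝ} {z : ℝ} (h : ∀ y, f y ≤ f z) :
    IsLocalMaxOn f Set.univ z :=
  Filter.Eventually.of_forall h

/-- Any level of a global Lipschitz viscosity subsolution dominates `G 0 y₀`, when `G`
has a minimum in `p` at `0` and a modulus of continuity in `y`. -/
lemma level_ge_of_subsol (G : ℝ → ℝ → ℝ) (μ : ℝ) (u : ℝ → ℝ) (hu : IsLip u)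
    (hsub : ∀ φ : ℝ → ℝ, ContDiff ℝ 1 φ → ∀ y₀ ∈ Set.univ,
      IsLocalMaxOn (fun y => u y - φ y) Set.univ y₀ → G (deriv φ y₀) y₀ ≤ μ)
    (hmin : ∀ p y, G 0 y ≤ G p y)
    (wb : ℝ → ℝ) (hw0 : wb 0 = 0) (hwc : ContinuousAt wb 0)
    (hmod : ∀ p x y, |G p y - G p x| ≤ wb (|x - y| * (1 + |p|)))
    (y₀ : ℝ) : G 0 y₀ ≤ μ := by
  obtain ⟨L, hL⟩ := hu
  -- it suffices to prove `G 0 y₀ ≤ μ + ν` for every `ν > 0`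
  by_contra hcon
  push_neg at hcon
  set ν := (G 0 y₀ - μ) / 2 with hν
  have hνpos : 0 < ν := by simp only [hν]; linarith
  -- choose the modulus radius
  obtain ⟨ρ₀, hρ₀pos, hρ₀⟩ : ∃ ρ₀ > 0, ∀ t : ℝ, |t| < ρ₀ → |wb t| < ν := by
    have := Metric.continuousAt_iff.1 hwc ν hνpos
    obtain ⟨δ, hδpos, hδ⟩ := this
    refine ⟨δ, hδpos, fun t ht => ?_⟩
    have := hδ (by simpa [Real.dist_eq] using ht)
    simpa [Real.dist_eq, hw0] using this
  set ρ : ℝ := min (ρ₀ / 2) 1 with hρ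
  have hρpos : 0 < ρ := by
    apply lt_min (by linarith) one_pos
  set B : ℝ := ((L : ℝ) + 1) / ρ with hB
  have hBpos : 0 < B := by positivity
  -- maximize `u - B (y - y₀)²` over `[y₀ - ρ, y₀ + ρ]`
  set φ : ℝ → ℝ := fun y => B * (y - y₀)^2 with hφ
  have hφc : ContDiff ℝ 1 φ := by
    apply ContDiff.mul contDiff_const
    exact (contDiff_id.sub contDiff_const).pow 2
  have hucont : Continuous u := hL.continuous
  obtain ⟨z, hzI, hz⟩ := (isCompact_Icc (a := y₀ - ρ) (b := y₀ + ρ)).exists_isMaxOn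
    ⟨y₀, by constructor <;> linarith⟩ (hucont.sub (continuous_const.mul
      ((continuous_id.sub continuous_const).pow 2))).continuousOn
  -- the max point is close to `y₀`
  have hkey : B * (z - y₀)^2 ≤ (L : ℝ) * |z - y₀| := by
    have h0 : u y₀ - φ y₀ ≤ u z - φ z := hz ⟨by linarith, by linarith⟩
    have h1 : φ y₀ = 0 := by simp [hφ]
    have h2 : u z - u y₀ ≤ (L : ℝ) * |z - y₀| := by
      have := hL.dist_le_mul z y₀
      rw [Real.dist_eq, Real.dist_eq] at this
      exact le_trans (le_abs_self _) this
    simp only [hφ] at h0 h1 ⊢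
    linarith
  have hclose : |z - y₀| < ρ := by
    by_contra hcc
    push_neg at hcc
    have h1 : B * ρ * |z - y₀| ≤ B * (z - y₀)^2 := by
      have : ρ * |z - y₀| ≤ |z - y₀| * |z - y₀| :=
        mul_le_mul_of_nonneg_right hcc (abs_nonneg _)
      calc B * ρ * |z - y₀| = B * (ρ * |z - y₀|) := by ring
        _ ≤ B * (|z - y₀| * |z - y₀|) := mul_le_mul_of_nonneg_left this (le_of_lt hBpos)
        _ = B * (z - y₀)^2 := by rw [← sq_abs]; ring
    have h2 : B * ρ = (L : ℝ) + 1 := by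
      simp only [hB]; field_simp
    have h3 : ((L : ℝ) + 1) * |z - y₀| ≤ (L : ℝ) * |z - y₀| := by
      calc ((L : ℝ) + 1) * |z - y₀| = B * ρ * |z - y₀| := by rw [h2]
        _ ≤ B * (z - y₀)^2 := h1
        _ ≤ (L : ℝ) * |z - y₀| := hkey
    have h4 : 0 < |z - y₀| := lt_of_lt_of_le hρpos hcc
    nlinarith
  -- local max on `univ` at `z`
  have hmax : IsLocalMaxOn (fun y => u y - φ y) Set.univ z := by
    apply isLocalMaxOn_univ_of_Icc (a := y₀ - ρ) (b := y₀ + ρ)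
    · have := (abs_lt.mp hclose).1; linarith
    · have := (abs_lt.mp hclose).2; linarith
    · exact fun y hy => hz hy
  have hle : G (deriv φ z) z ≤ μ := hsub φ hφc z (mem_univ z) hmax
  have hle0 : G 0 z ≤ μ := le_trans (hmin _ _) hle
  -- transfer to `y₀` using the modulus
  have hmod0 : |G 0 y₀ - G 0 z| ≤ wb (|z - y₀| * (1 + |(0:ℝ)|)) := hmod 0 z y₀
  have harg : |z - y₀| * (1 + |(0:ℝ)|) = |z - y₀| := by simp
  rw [harg] at hmod0
  have hwsmall : |wb (|z - y₀|)| < ν := by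
    apply hρ₀
    rw [abs_abs]
    calc |z - y₀| < ρ := hclose
      _ ≤ ρ₀ / 2 := min_le_left _ _
      _ < ρ₀ := by linarith
  have : G 0 y₀ ≤ μ + ν := by
    have h5 : G 0 y₀ - G 0 z ≤ |G 0 y₀ - G 0 z| := le_abs_self _
    have h6 : wb (|z - y₀|) ≤ |wb (|z - y₀|)| := le_abs_self _
    linarith
  simp only [hν] at this
  linarith


end CorrAux

set_option maxHeartbeats 1600000 in
/-- convergence of the approximated corrector at the origin:
`δ v^δ(0, ω) → -Ā` as `δ → 0`, for `ω` in the good event `Ω₀^{ε₀}`. -/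
theorem corrector_convergence_at_origin [MeasurableSpace Ω]
    (P : Measure Ω) [IsProbabilityMeasure P]
    (τ : ℝ → Ω → Ω) (hτ : ErgodicSetup P τ)
    (HL HR H0 : ℝ → ℝ → Ω → ℝ)
    (hHL : HamHyp HL) (hHR : HamHyp HR) (hH0 : HamHyp H0)
    (hstatL : Stationary τ HL) (hstatR : Stationary τ HR) (hstat0 : Stationary τ H0)
    (hdepL : UnitRangeDep P HL) (hdepR : UnitRangeDep P HR) (hdep0 : UnitRangeDep P H0)
    (H : ℝ → ℝ → ℝ → Ω → ℝ) (hHfam : ∀ ε : ℝ, 0 < ε → HamHyp (H ε))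
    (hdecomp : DecompEps HL HR H0 H)
    (ε₀ : ℝ) (hε₀ : 0 < ε₀)
    (Abar : ℝ) (hAbar : ∀ᵐ ω ∂P, (⨆ y : ℝ, H0 0 y ω) = Abar)
    (θ : ℝ → ℝ) (hθ : Tendsto θ (𝓝[>] (0 : ℝ)) (𝓝 0))
    (Ω₀ : ℝ → Set Ω)
    (hΩ₀meas : ∀ ε : ℝ, 0 < ε → MeasurableSet (Ω₀ ε))
    (hΩ₀mono : ∀ ε ε' : ℝ, 0 < ε → ε ≤ ε' → Ω₀ ε' ⊆ Ω₀ ε)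
    (hΩ₀P : ∀ ε : ℝ, 0 < ε → (P (Ω₀ ε)).toReal = 1 - θ ε)
    (hΩ₀flux : ∀ ε : ℝ, 0 < ε → ∀ ω ∈ Ω₀ ε, fluxLimiter (H ε) ω = Abar)
    (hΩ₀homog : ∀ ε : ℝ, 0 < ε → ∀ ω ∈ Ω₀ ε, ∀ μ : ℝ, Abar < μ → ∀ x y : ℝ,
      ∃ mbar : ℝ, Tendsto (fun t : ℝ => metricSol (H ε) μ ω (t * y) (t * x) / t)
        atTop (𝓝 mbar))
    (ε : ℝ) (hε : 0 < ε) (hεε₀ : ε ≤ ε₀)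
    (ω : Ω) (hω : ω ∈ Ω₀ ε₀)
    (v : ℝ → ℝ → ℝ)
    (hv : ∀ δ : ℝ, 0 < δ → δ ≤ ε → Continuous (v δ) ∧ (∃ M : ℝ, ∀ y : ℝ, |v δ y| ≤ M) ∧
      IsViscSolDelta (fun p y => H ε p y ω) δ (v δ)) :
    Tendsto (fun δ : ℝ => δ * v δ 0) (𝓝[Set.Ioc (0 : ℝ) ε] (0 : ℝ)) (𝓝 (-Abar)) := by
  classical
  obtain ⟨K, hK⟩ := (hHfam ε hε).lip_p
  obtain ⟨c₀, C₀, γ, hc₀, hC₀, hγ, hbd⟩ := (hHfam ε hε).bounds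
  obtain ⟨wb, hwmono, hw0, hwc, hmod'⟩ := (hHfam ε hε).modulus
  have hmin : ∀ p y : ℝ, H ε 0 y ω ≤ H ε p y ω := fun p y => (hHfam ε hε).min_at_zero p y ω
  have hmod : ∀ p x y : ℝ, |H ε p y ω - H ε p x ω| ≤ wb (|x - y| * (1 + |p|)) :=
    fun p x y => hmod' p x y ω
  have hKb : ∀ a b y : ℝ, |H ε a y ω - H ε b y ω| ≤ (K : ℝ) * |a - b| := by
    intro a b y
    have := (hK y ω).dist_le_mul a b
    rwa [Real.dist_eq, Real.dist_eq] at this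
  have hKnn : (0 : ℝ) ≤ (K : ℝ) := K.coe_nonneg
  have hzero : ∀ y : ℝ, H ε (-γ) y ω = 0 := by
    intro y
    have h1 := (hbd (-γ) y ω).1
    have h2 := (hbd (-γ) y ω).2
    have habs : |-γ + γ| = 0 := by simp
    rw [habs] at h1 h2
    have h1' : (0 : ℝ) ≤ H ε (-γ) y ω := by simpa using h1
    have h2' : H ε (-γ) y ω ≤ 0 := by simpa using h2
    linarith
  have hub : ∀ y : ℝ, H ε 0 y ω ≤ 0 := fun y => le_of_le_of_eq (hmin (-γ) y) (hzero y)
  obtain ⟨S₀, hS₀def⟩ : ∃ S₀ : ℝ, S₀ = sSup (Set.range fun y => H ε 0 y ω) := ⟨_, rfl⟩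
  have hbdd : BddAbove (Set.range fun y => H ε 0 y ω) := ⟨0, by rintro _ ⟨y, rfl⟩; exact hub y⟩
  have hne : (Set.range fun y => H ε 0 y ω).Nonempty := ⟨H ε 0 0 ω, ⟨0, rfl⟩⟩
  have hS₀le : ∀ y : ℝ, H ε 0 y ω ≤ S₀ := fun y => hS₀def ▸ le_csSup hbdd ⟨y, rfl⟩
  -- the flux limiter equals `S₀`
  have hωε : ω ∈ Ω₀ ε := hΩ₀mono ε ε₀ hε hεε₀ hω
  have hflux : fluxLimiter (H ε) ω = Abar := hΩ₀flux ε hε ω hωε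
  have hAS : Abar = S₀ := by
    rw [← hflux]
    unfold fluxLimiter
    have hSin : S₀ ∈ {μ : ℝ | ∃ u : ℝ → ℝ, IsLip u ∧
        IsViscSubsol (fun p y => H ε p y ω) μ Set.univ u} := by
      refine ⟨fun _ => 0, ⟨0, LipschitzWith.const 0⟩, ?_⟩
      intro φ hφ y₀ _ hmax
      have hmax' : ∀ᶠ y in 𝓝 y₀, (0 : ℝ) - φ y ≤ 0 - φ y₀ := by
        have h := hmax
        rw [IsLocalMaxOn, nhdsWithin_univ] at h
        exact h
      have hloc : IsLocalMin φ y₀ := by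
        filter_upwards [hmax'] with y hy
        linarith
      have hd : deriv φ y₀ = 0 := hloc.deriv_eq_zero
      show H ε (deriv φ y₀) y₀ ω ≤ S₀
      rw [hd]
      exact hS₀le y₀
    have hlow : ∀ μ ∈ {μ : ℝ | ∃ u : ℝ → ℝ, IsLip u ∧
        IsViscSubsol (fun p y => H ε p y ω) μ Set.univ u}, S₀ ≤ μ := by
      rintro μ ⟨u, hu, hsub⟩
      rw [hS₀def]
      apply csSup_le hne
      rintro _ ⟨y₀, rfl⟩
      exact CorrAux.level_ge_of_subsol (fun p y => H ε p y ω) μ u hu hsub hmin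
        wb hw0 hwc hmod y₀
    exact le_antisymm (csInf_le ⟨S₀, hlow⟩ hSin) (le_csInf ⟨S₀, hSin⟩ hlow)
  -- now prove the convergence
  rw [Metric.tendsto_nhdsWithin_nhds]
  intro η hη
  -- a near-maximum point of `H ε 0 · ω`
  obtain ⟨a, ha, hystar0⟩ := exists_lt_of_lt_csSup hne
    (show S₀ - η/4 < sSup (Set.range fun y => H ε 0 y ω) by rw [← hS₀def]; linarith only [hη])
  obtain ⟨ystar, rfl⟩ := ha
  have hystar : S₀ - η/4 < H ε 0 ystar ω := hystar0
  -- modulus radius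
  obtain ⟨ρ₀, hρ₀pos, hρ₀⟩ : ∃ ρ₀ > 0, ∀ t : ℝ, |t| < ρ₀ → |wb t| < η/4 := by
    obtain ⟨δ', hδ'pos, hδ'⟩ := Metric.continuousAt_iff.1 hwc (η/4) (by linarith only [hη])
    refine ⟨δ', hδ'pos, fun t ht => ?_⟩
    have := hδ' (show dist t 0 < δ' by simpa [Real.dist_eq] using ht)
    simpa [Real.dist_eq, hw0] using this
  obtain ⟨d, hddef⟩ : ∃ d : ℝ, d = min (ρ₀ / 2) 1 := ⟨_, rfl⟩
  have hdpos : 0 < d := hddef ▸ lt_min (by linarith only [hρ₀pos]) one_pos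
  have hdρ₀ : d ≤ ρ₀ / 2 := hddef ▸ min_le_left _ _
  -- coercivity radius at level `S₀`
  obtain ⟨R, hR⟩ := (hHfam ε hε).coercive S₀
  obtain ⟨R₁, hR₁def⟩ : ∃ R₁ : ℝ, R₁ = max R 1 := ⟨_, rfl⟩
  have hR₁pos : (0 : ℝ) < R₁ := hR₁def ▸ lt_of_lt_of_le one_pos (le_max_right R 1)
  have hR₁ : ∀ p y : ℝ, R₁ ≤ |p| → S₀ ≤ H ε p y ω := fun p y h =>
    hR p y ω (le_trans (hR₁def ▸ le_max_left R 1) h)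
  have hSdpos : (0 : ℝ) < Real.sqrt (1 + d^2) := Real.sqrt_pos.2 (by positivity)
  obtain ⟨B, hBdef⟩ : ∃ B : ℝ, B = R₁ * Real.sqrt (1 + d^2) / d := ⟨_, rfl⟩
  have hBpos : 0 < B := hBdef ▸ div_pos (mul_pos hR₁pos hSdpos) hdpos
  obtain ⟨C, hCdef⟩ : ∃ C : ℝ, C = B * CorrAux.gtest ystar 0 := ⟨_, rfl⟩
  have hCnn : 0 ≤ C := hCdef ▸ mul_nonneg (le_of_lt hBpos) (CorrAux.gtest_nonneg ystar 0)
  obtain ⟨δ₀, hδ₀def⟩ : ∃ δ₀ : ℝ, δ₀ = (η/2) / (C + 1) := ⟨_, rfl⟩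
  have hδ₀pos : 0 < δ₀ := by rw [hδ₀def]; positivity
  refine ⟨δ₀, hδ₀pos, ?_⟩
  intro x hx hdist
  have hxpos : 0 < x := hx.1
  have hxε : x ≤ ε := hx.2
  have hxδ₀ : x < δ₀ := by
    rw [Real.dist_eq, sub_zero] at hdist
    exact lt_of_le_of_lt (le_abs_self x) hdist
  obtain ⟨hcont, ⟨M, hM⟩, hsubs0, hsups0⟩ := hv x hxpos hxε
  have hsubs : ∀ φ : ℝ → ℝ, ContDiff ℝ 1 φ → ∀ y₀ : ℝ,
      IsLocalMax (fun y => v x y - φ y) y₀ → x * v x y₀ + H ε (deriv φ y₀) y₀ ω ≤ 0 := hsubs0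
  have hsups : ∀ φ : ℝ → ℝ, ContDiff ℝ 1 φ → ∀ y₀ : ℝ,
      IsLocalMin (fun y => v x y - φ y) y₀ → 0 ≤ x * v x y₀ + H ε (deriv φ y₀) y₀ ω := hsups0
  clear hsubs0 hsups0
  -- PART A : `0 ≤ x * v x 0 + S₀`
  have hlower : 0 ≤ x * v x 0 + S₀ := by
    by_contra hneg
    push_neg at hneg
    obtain ⟨κ, hκdef⟩ : ∃ κ : ℝ, κ = -(x * v x 0 + S₀) / ((K : ℝ) + 1) := ⟨_, rfl⟩
    have hnum : 0 < -(x * v x 0 + S₀) := by linarith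
    have hκpos : 0 < κ := hκdef ▸ div_pos hnum (by positivity)
    obtain ⟨z, hzmax0⟩ := CorrAux.exists_max_pen (fun y => -(v x y)) hcont.neg M
      (fun y => by simpa using hM y) κ hκpos 0
    have hzmax : ∀ y, -(v x y) - κ * CorrAux.gtest 0 y
        ≤ -(v x z) - κ * CorrAux.gtest 0 z := hzmax0
    clear hzmax0
    have hφc : ContDiff ℝ 1 (fun y => (-κ) * CorrAux.gtest 0 y) := CorrAux.gtest_contDiff 0 (-κ)
    have hlocmin : IsLocalMin (fun y => v x y - (-κ) * CorrAux.gtest 0 y) z := by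
      apply Filter.Eventually.of_forall
      intro y
      have h := hzmax y
      simp only
      linarith only [h]
    have hsupz := hsups (fun y => (-κ) * CorrAux.gtest 0 y) hφc z hlocmin
    have hder : deriv (fun y => (-κ) * CorrAux.gtest 0 y) z
        = (-κ) * ((z - 0) / Real.sqrt (1 + (z - 0)^2)) :=
      ((CorrAux.gtest_hasDerivAt 0 z).const_mul (-κ)).deriv
    rw [hder] at hsupz
    have hGb : H ε ((-κ) * ((z - 0) / Real.sqrt (1 + (z - 0)^2))) z ω ≤ S₀ + (K : ℝ) * κ := by
      have h1 := hKb ((-κ) * ((z - 0) / Real.sqrt (1 + (z - 0)^2))) 0 z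
      have h2 : |(-κ) * ((z - 0) / Real.sqrt (1 + (z - 0)^2))| ≤ κ := by
        rw [abs_mul, abs_neg, abs_of_pos hκpos]
        have h3 := CorrAux.gtest_deriv_abs_le 0 z
        have := mul_le_mul_of_nonneg_left h3 (le_of_lt hκpos)
        linarith only [this]
      have h4 : (K : ℝ) * |(-κ) * ((z - 0) / Real.sqrt (1 + (z - 0)^2)) - 0| ≤ (K : ℝ) * κ := by
        rw [sub_zero]
        exact mul_le_mul_of_nonneg_left h2 hKnn
      have h5 := le_trans (le_abs_self _) (le_trans h1 h4)
      linarith only [h5, hS₀le z]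
    have hvz : v x z ≤ v x 0 := by
      have h := hzmax 0
      rw [CorrAux.gtest_self 0] at h
      have hg : 0 ≤ CorrAux.gtest 0 z := CorrAux.gtest_nonneg 0 z
      linarith only [h, mul_nonneg (le_of_lt hκpos) hg]
    have hxvz : x * v x z ≤ x * v x 0 :=
      mul_le_mul_of_nonneg_left hvz (le_of_lt hxpos)
    have hKκ : (K : ℝ) * κ < -(x * v x 0 + S₀) := by
      have hlt : (K : ℝ) / ((K : ℝ) + 1) < 1 := by
        rw [div_lt_one (by positivity)]
        linarith
      calc (K : ℝ) * κ = (-(x * v x 0 + S₀)) * ((K : ℝ) / ((K : ℝ) + 1)) := by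
            rw [hκdef]; ring
        _ < (-(x * v x 0 + S₀)) * 1 := mul_lt_mul_of_pos_left hlt hnum
        _ = -(x * v x 0 + S₀) := by ring
    linarith only [hsupz, hGb, hxvz, hKκ]
  -- PART B : `x * v x 0 + S₀ < η`
  have hupper : x * v x 0 + S₀ < η := by
    obtain ⟨z, hzmax⟩ := CorrAux.exists_max_pen (v x) hcont M hM B hBpos ystar
    have hlocmax : IsLocalMax (fun y => v x y - B * CorrAux.gtest ystar y) z :=
      Filter.Eventually.of_forall (fun y => hzmax y)
    have hsubz := hsubs (fun y => B * CorrAux.gtest ystar y)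
      (CorrAux.gtest_contDiff ystar B) z hlocmax
    have hder : deriv (fun y => B * CorrAux.gtest ystar y) z
        = B * ((z - ystar) / Real.sqrt (1 + (z - ystar)^2)) :=
      ((CorrAux.gtest_hasDerivAt ystar z).const_mul B).deriv
    rw [hder] at hsubz
    have hGlow : S₀ - η/2 ≤ H ε (B * ((z - ystar) / Real.sqrt (1 + (z - ystar)^2))) z ω := by
      rcases lt_or_ge |z - ystar| d with hcase | hcase
      · -- near case: use the modulus
        have h1 := hmin (B * ((z - ystar) / Real.sqrt (1 + (z - ystar)^2))) z
        have h2 := hmod 0 z ystar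
        have harg : |z - ystar| * (1 + |(0:ℝ)|) = |z - ystar| := by simp
        rw [harg] at h2
        have h3 : |wb (|z - ystar|)| < η/4 := by
          apply hρ₀
          rw [abs_abs]
          calc |z - ystar| < d := hcase
            _ ≤ ρ₀ / 2 := hdρ₀
            _ < ρ₀ := by linarith only [hρ₀pos]
        have h4 := le_abs_self (H ε 0 ystar ω - H ε 0 z ω)
        have h5 := le_abs_self (wb (|z - ystar|))
        linarith only [h1, h2, h3, h4, h5, hystar]
      · -- far case: use coercivity
        have hslope : R₁ ≤ |B * ((z - ystar) / Real.sqrt (1 + (z - ystar)^2))| := by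
          rw [abs_mul, abs_of_pos hBpos]
          have hmono := CorrAux.ratio_mono (le_of_lt hdpos) hcase
          have hsz : (0 : ℝ) < Real.sqrt (1 + (z - ystar)^2) := Real.sqrt_pos.2 (by positivity)
          have habs : |(z - ystar) / Real.sqrt (1 + (z - ystar)^2)|
              = |z - ystar| / Real.sqrt (1 + (z - ystar)^2) := by
            rw [abs_div, abs_of_pos hsz]
          rw [habs]
          have hBd : B * (d / Real.sqrt (1 + d^2)) = R₁ := by
            rw [hBdef]
            field_simp
          calc R₁ = B * (d / Real.sqrt (1 + d^2)) := hBd.symm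
            _ ≤ B * (|z - ystar| / Real.sqrt (1 + (z - ystar)^2)) :=
                mul_le_mul_of_nonneg_left hmono (le_of_lt hBpos)
        have := hR₁ _ z hslope
        linarith only [this, hη]
    have hv0z : v x 0 ≤ v x z + B * CorrAux.gtest ystar 0 := by
      have h := hzmax 0
      have hg : 0 ≤ CorrAux.gtest ystar z := CorrAux.gtest_nonneg _ _
      linarith only [h, mul_nonneg (le_of_lt hBpos) hg]
    have h1 : x * v x z ≤ -(S₀ - η/2) := by linarith only [hsubz, hGlow]
    have h2 : x * v x 0 ≤ x * v x z + x * (B * CorrAux.gtest ystar 0) := by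
      have h := mul_le_mul_of_nonneg_left hv0z (le_of_lt hxpos)
      have hdist2 : x * (v x z + B * CorrAux.gtest ystar 0)
          = x * v x z + x * (B * CorrAux.gtest ystar 0) := by ring
      linarith only [h, hdist2]
    have hxC : x * C < η/2 := by
      have hstep : x * C ≤ δ₀ * C := mul_le_mul_of_nonneg_right (le_of_lt hxδ₀) hCnn
      have hδ₀C : δ₀ * (C + 1) = η/2 := by
        rw [hδ₀def]
        field_simp
      have hexp : δ₀ * (C + 1) = δ₀ * C + δ₀ := by ring
      linarith only [hstep, hδ₀C, hexp, hδ₀pos]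
    rw [hCdef] at hxC
    linarith only [h1, h2, hxC]
  -- conclusion
  rw [Real.dist_eq, hAS, sub_neg_eq_add, abs_of_nonneg hlower]
  exact hupper
end
end
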